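/- arXiv:2503.00886 — 2 statements merged into one kernel-verified Lean document; each statement's English description precedes it below -/
import Mathlib

section
/- Let [a,b] be a segment with b > a and m a multisegment in good range for [a,b], and let r ∈ ℤ_{>0} be sufficiently large. If |I_{[a]}(m)| = |m|, then D^{Lang,L}_{[a]}(𝔻_r(m)) = 𝔻_r(I_{[a]}(m)) and D^{Lang,L}_{[a]}(𝔻_r^{[a,b]}(m)) = 𝔻_r^{[a,b]}(I_{[a]}(m)). -/
namespace Multiseg

/-- A segment `[a,b]` on a fixed cuspidal line, encoded by its endpoints. -/
abbrev Seg := ℤ × ℤ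

/-- A multiset of pairs is a multisegment when each pair is a genuine segment. -/
def IsMS (m : Multiset Seg) : Prop := ∀ Δ ∈ m, Δ.1 ≤ Δ.2

/-- `Δ ≺ Δ'` : the segment `Δ` precedes `Δ'`. -/
def Prec (Δ Δ' : Seg) : Prop := Δ.1 < Δ'.1 ∧ Δ.2 < Δ'.2 ∧ Δ'.1 ≤ Δ.2 + 1

instance : DecidableRel Prec := fun _ _ => by unfold Prec; infer_instance

/-- `Δ ⊆ Δ'` as segments. -/
def SSub (Δ Δ' : Seg) : Prop := Δ'.1 ≤ Δ.1 ∧ Δ.2 ≤ Δ'.2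

/-- `m[i]`, the segments of `m` starting at `i`. -/
def startAt (m : Multiset Seg) (i : ℤ) : Multiset Seg := m.filter fun Δ => Δ.1 = i

/-- `m⟨i⟩`, the segments of `m` ending at `i`. -/
def endAt (m : Multiset Seg) (i : ℤ) : Multiset Seg := m.filter fun Δ => Δ.2 = i

/-- `m_{[a,b]} = {[a',b'] ∈ m : a ≤ a' ≤ b+1 ≤ b'+1}`. -/
def mRange (m : Multiset Seg) (a b : ℤ) : Multiset Seg :=
  m.filter fun Δ => a ≤ Δ.1 ∧ Δ.1 ≤ b + 1 ∧ b ≤ Δ.2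

/-- Add the segment `[x,y]` to `m`, discarding it if it is void. -/
def pushSeg (m : Multiset Seg) (x y : ℤ) : Multiset Seg :=
  if x ≤ y then m + {(x, y)} else m

def msetMax (s : Multiset ℤ) : Option ℤ :=
  if h : s = 0 then none else some (s.toFinset.max' (Multiset.toFinset_nonempty.mpr h))

def msetMin (s : Multiset ℤ) : Option ℤ :=
  if h : s = 0 then none else some (s.toFinset.min' (Multiset.toFinset_nonempty.mpr h))

/-- The longest segment of `m[i]`, if any. -/
def longStart (m : Multiset Seg) (i : ℤ) : Option Seg :=
  (msetMax ((startAt m i).map Prod.snd)).map fun y => (i, y)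

/-- The shortest segment of `m[i]`, if any. -/
def shortStart (m : Multiset Seg) (i : ℤ) : Option Seg :=
  (msetMin ((startAt m i).map Prod.snd)).map fun y => (i, y)

/-- The longest segment of `m⟨i⟩`, if any. -/
def longEnd (m : Multiset Seg) (i : ℤ) : Option Seg :=
  (msetMin ((endAt m i).map Prod.fst)).map fun x => (x, i)

/-- The shortest segment of `m⟨i⟩`, if any. -/
def shortEnd (m : Multiset Seg) (i : ℤ) : Option Seg :=
  (msetMax ((endAt m i).map Prod.fst)).map fun x => (x, i)

/-- One removal step of the `tds(·,c)` process: remove the longest segment `Δ''`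
of `m[c+1]` and the longest segment `Δ'` of `m[c]` with `Δ' ≺ Δ''`. -/
def tdsStep (m : Multiset Seg) (c : ℤ) : Option (Multiset Seg) :=
  match longStart m (c + 1) with
  | none => none
  | some Δ'' =>
    match msetMax (((startAt m c).filter fun Δ => Prec Δ Δ'').map Prod.snd) with
    | none => none
    | some y => some ((m.erase (c, y)).erase Δ'')

def tdsIterF (c : ℤ) : ℕ → Multiset Seg → Multiset Seg
  | 0, m => m
  | n + 1, m =>
    match tdsStep m c with
    | none => m
    | some m' => tdsIterF c n m'

/-- Iterate the `tds(·,c)` process until it terminates. -/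
def tdsIter (c : ℤ) (m : Multiset Seg) : Multiset Seg := tdsIterF c m.card m

/-- The `ρ`-derivative algorithm `𝒟_{[a]}`; the value `none` codes `∞`. -/
def Drho (a : ℤ) (m : Multiset Seg) : Option (Multiset Seg) :=
  (shortStart (tdsIter a m) a).map fun Δ => pushSeg (m.erase Δ) (a + 1) Δ.2

/-- `ε_{[a]}(m)`, the number of segments starting at `a` left after the
`tds(·,a)` process terminates. -/
def epsA (a : ℤ) (m : Multiset Seg) : ℕ := (startAt (tdsIter a m) a).card

/-- The next element of an upward sequence after `p`. -/
def usNext (n : Multiset Seg) (p : Seg) : Option Seg :=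
  match msetMin ((n.filter fun Δ => Prec p Δ).map Prod.fst) with
  | none => none
  | some aj =>
    (msetMax ((((n.filter fun Δ => Prec p Δ).filter fun Δ => Δ.1 = aj)).map Prod.snd)).map
      fun y => (aj, y)

def usAux (n : Multiset Seg) : ℕ → Seg → List Seg
  | 0, _ => []
  | fuel + 1, p =>
    match usNext n p with
    | none => []
    | some Δ => Δ :: usAux n fuel Δ

/-- The upward sequence `Us(n)` of maximally linked segments of `n`. -/
def usList (n : Multiset Seg) : List Seg :=
  match msetMin (n.map Prod.fst) with
  | none => []
  | some a1 =>
    match longStart n a1 with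
    | none => []
    | some Δ1 => Δ1 :: usAux n n.card Δ1

/-- The decomposition of a multisegment into successive upward sequences. -/
def usDecomp : ℕ → Multiset Seg → List (List Seg)
  | 0, _ => []
  | fuel + 1, n =>
    if n = 0 then [] else usList n :: usDecomp fuel (n - (usList n : Multiset Seg))

/-- `[x,y] ⊆ [u,v]` (with the void interval contained in anything). -/
def intSubB (x y u v : ℤ) : Bool := decide (y < x) || (decide (u ≤ x) && decide (y ≤ v))

/-- Find, in a row of an upward-sequence decomposition, the first segment `Δ`
whose removable free section contains `[s(Δ), top]`. -/
def findRowD : List Seg → ℤ → Option Seg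
  | [], _ => none
  | [Δ], top => if intSubB Δ.1 top Δ.1 Δ.2 then some Δ else none
  | Δ :: Δ' :: rest, top =>
    if intSubB Δ.1 top Δ.1 (Δ'.1 - 2) then some Δ else findRowD (Δ' :: rest) top

/-- The selection step of the Langlands derivative algorithm, scanning the rows
downwards from the last one; it records each selected segment together with the
start of its truncation. -/
def selAuxD (rows : List (List Seg)) : ℕ → ℤ → List (Seg × ℤ)
  | 0, _ => []
  | n + 1, top =>
    match findRowD (rows.getD n []) top with
    | some Δ => (Δ, top + 1) :: selAuxD rows n (Δ.1 - 1)
    | none => selAuxD rows n top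

/-- The Langlands derivative algorithm `𝒟^Lang_{[a,b]}`; `none` codes `∞`. -/
def DLang (a b : ℤ) (m : Multiset Seg) : Option (Multiset Seg) :=
  let m1 := mRange m a b
  let rows := usDecomp m1.card m1
  let sel := selAuxD rows rows.length b
  match sel.getLast? with
  | none => none
  | some (Δl, _) =>
    if Δl.1 = a then
      some (sel.foldl (fun acc p => pushSeg (acc.erase p.1) p.2 p.1.2) m)
    else none

/-- One removal step of the `tus(·,c)` process. -/
def tusStep (n : Multiset Seg) (c : ℤ) : Option (Multiset Seg) :=
  match shortStart n c with
  | none => none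
  | some Δ' =>
    match msetMin (((startAt n (c + 1)).filter fun Δ => Prec Δ' Δ).map Prod.snd) with
    | none => none
    | some y => some ((n.erase Δ').erase (c + 1, y))

def tusIterF (c : ℤ) : ℕ → Multiset Seg → Multiset Seg
  | 0, n => n
  | k + 1, n =>
    match tusStep n c with
    | none => n
    | some n' => tusIterF c k n'

/-- Iterate the `tus(·,c)` process until it terminates. -/
def tusIter (c : ℤ) (n : Multiset Seg) : Multiset Seg := tusIterF c n.card n

/-- The `ρ`-integral algorithm `ℐ_{[a]}` (always defined). -/
def Irho (a : ℤ) (n : Multiset Seg) : Multiset Seg :=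
  match longStart (tusIter a n) (a + 1) with
  | none => n + {(a, a)}
  | some Δ => pushSeg (n.erase Δ) a Δ.2

/-- The next element of a downward sequence after `p`. -/
def dsNext (n : Multiset Seg) (p : Seg) : Option Seg :=
  match msetMax ((n.filter fun Δ => Prec Δ p).map Prod.fst) with
  | none => none
  | some aq => shortStart n aq

def dsAux (n : Multiset Seg) : ℕ → Seg → List Seg
  | 0, _ => []
  | k + 1, p =>
    match dsNext n p with
    | none => []
    | some Δ => Δ :: dsAux n k Δ

/-- The downward sequence `Ds(n)` of minimal linked segments with the largest
starting. -/
def dsList (n : Multiset Seg) : List Seg :=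
  match msetMax (n.map Prod.fst) with
  | none => []
  | some a1 =>
    match shortStart n a1 with
    | none => []
    | some Δ1 => Δ1 :: dsAux n n.card Δ1

/-- The decomposition of a multisegment into successive downward sequences. -/
def dsDecomp : ℕ → Multiset Seg → List (List Seg)
  | 0, _ => []
  | k + 1, n =>
    if n = 0 then [] else dsList n :: dsDecomp k (n - (dsList n : Multiset Seg))

/-- Find, in a row of a downward-sequence decomposition, the segment whose set
of addable free points contains `pt`. -/
def findRowI (a : ℤ) : List Seg → ℤ → Option Seg
  | [], _ => none
  | [Δ], pt => if decide (a ≤ pt) && decide (pt ≤ Δ.1 - 1) then some Δ else none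
  | Δ :: Δ' :: rest, pt =>
    if decide (Δ'.1 + 1 ≤ pt) && decide (pt ≤ Δ.1 - 1) then some Δ
    else findRowI a (Δ' :: rest) pt

/-- The selection step of the Langlands integral algorithm; it records each
selected segment together with the start of its extension. -/
def selAuxI (a : ℤ) (rows : List (List Seg)) : ℕ → ℤ → List (Seg × ℤ)
  | 0, _ => []
  | n + 1, pt =>
    match findRowI a (rows.getD n []) pt with
    | some Δ => (Δ, pt) :: selAuxI a rows n Δ.1
    | none => selAuxI a rows n pt

/-- The Langlands integral algorithm `ℐ^Lang_{[a,b]}`. -/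
def ILang (a b : ℤ) (m : Multiset Seg) : Multiset Seg :=
  let m1 := mRange m a b
  let rows := dsDecomp m1.card m1
  let sel := selAuxI a rows rows.length a
  let base := sel.foldl (fun acc p => pushSeg (acc.erase p.1) p.2 p.1.2) m
  match sel.getLast? with
  | none => pushSeg base a b
  | some (Δl, _) => pushSeg base Δl.1 b

/-- `m` is in good range for `[a,b]`. -/
def GoodRange (m : Multiset Seg) (a b : ℤ) : Prop := mRange m a b = m

/-- `Θ`, the Gelfand–Kazhdan involution on multisegments. -/
def Theta (m : Multiset Seg) : Multiset Seg := m.map fun Δ => (-Δ.2, -Δ.1)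

/-- The exotic duality `𝔻_r`. -/
def Dual (r : ℤ) (m : Multiset Seg) : Multiset Seg :=
  m.map fun Δ => (-r + Δ.2 + 1, Δ.1 - 1)

/-- `𝔻_r^{[a,b]}`. -/
def DualAB (r a b : ℤ) (m : Multiset Seg) : Multiset Seg := Dual r m + {(b - r + 1, b)}

/-- The left Langlands derivative algorithm `𝒟^{Lang,L}_{[a,b]}`. -/
def DLangL (a b : ℤ) (m : Multiset Seg) : Option (Multiset Seg) :=
  (DLang (-b) (-a) (Theta m)).map Theta

/-- The left `ρ`-derivative algorithm `𝒟^{Lang,L}_{[a]}`. -/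
def DrhoL (a : ℤ) (m : Multiset Seg) : Option (Multiset Seg) :=
  (Drho (-a) (Theta m)).map Theta

/-- The next segment chosen by the MW algorithm after `p`. -/
def mwNext (m : Multiset Seg) (p : Seg) : Option Seg :=
  (msetMax (((endAt m (p.2 - 1)).filter fun Δ => Prec Δ p).map Prod.fst)).map
    fun x => (x, p.2 - 1)

def mwAux (m : Multiset Seg) : ℕ → Seg → List Seg
  | 0, _ => []
  | k + 1, p =>
    match mwNext m p with
    | none => []
    | some Δ => Δ :: mwAux m k Δ

/-- The ordered segments participating in the MW algorithm for `m`. -/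
def mwList (m : Multiset Seg) : List Seg :=
  match msetMax (m.map Prod.snd) with
  | none => []
  | some b0 =>
    match shortEnd m b0 with
    | none => []
    | some Δ0 => Δ0 :: mwAux m m.card Δ0

/-- `𝒟^MW(m)`. -/
def DMW (m : Multiset Seg) : Multiset Seg :=
  (mwList m).foldl (fun acc Δ => pushSeg (acc.erase Δ) Δ.1 (Δ.2 - 1)) m

/-- The first segment `Δ(m)` produced by the MW algorithm for `m`. -/
def mwFirstSeg (m : Multiset Seg) : Option Seg :=
  match (mwList m).head?, (mwList m).getLast? with
  | some Δ0, some Δk => some (Δk.1, Δ0.2)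
  | _, _ => none

/-- The total relative length of a multisegment. -/
def totalLen (m : Multiset Seg) : ℕ := (m.map fun Δ => (Δ.2 - Δ.1 + 1).toNat).sum

def sharpAux : ℕ → Multiset Seg → Multiset Seg
  | 0, _ => 0
  | k + 1, m =>
    if m = 0 then 0
    else
      match mwFirstSeg m with
      | none => 0
      | some Δ => Δ ::ₘ sharpAux k (DMW m)

/-- The Mœglin–Waldspurger involution `m^#`. -/
def msharp (m : Multiset Seg) : Multiset Seg := sharpAux (totalLen m) m

/-- `ε^MW_{[a,c]}(m)`, the multiplicity of `[a,c]` in `m^#`. -/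
def epsMW (a c : ℤ) (m : Multiset Seg) : ℕ := (msharp m).count (a, c)

/-- `m_i`: remove from `m` the participants of the first `i` runs of the MW
algorithm. -/
def mwStage (m : Multiset Seg) : ℕ → Multiset Seg
  | 0 => m
  | i + 1 => mwStage m i - (mwList (DMW^[i] m) : Multiset Seg)

/-- `MW_k(m)`: all segments ending at `k` participating in the first `r` runs
of the MW algorithm. -/
def MWkSet (m : Multiset Seg) (r : ℕ) (k : ℤ) : Multiset Seg :=
  ∑ i ∈ Finset.range r, (mwList (DMW^[i] m) : Multiset Seg).filter fun Δ => Δ.2 = k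

def upNbrAux (m : Multiset Seg) : ℕ → Seg → Option (List Seg)
  | 0, p => some [p]
  | k + 1, p =>
    match msetMin (((endAt m (p.2 + 1)).filter fun Δ => Prec p Δ).map Prod.fst) with
    | none => none
    | some x => (upNbrAux m k (x, p.2 + 1)).map fun l => p :: l

/-- The removal upward sequence of maximal linked segments in neighbors on `m`
ranging from `a-1` to `b` (if it exists). -/
def upSeqNbr (m : Multiset Seg) (a b : ℤ) : Option (List Seg) :=
  match longEnd m (a - 1) with
  | none => none
  | some Δ => upNbrAux m (b - (a - 1)).toNat Δ

def zelRemF (a b : ℤ) : ℕ → Multiset Seg → Multiset Seg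
  | 0, m => m
  | k + 1, m =>
    match upSeqNbr m a b with
    | none => m
    | some l => zelRemF a b k (m - (l : Multiset Seg))

/-- Repeatedly remove removal upward sequences of maximal linked segments in
neighbors ranging from `a-1` to `b`, until none exists. -/
def zelRem (a b : ℤ) (m : Multiset Seg) : Multiset Seg := zelRemF a b m.card m

def zelRemCountF (a b : ℤ) : ℕ → Multiset Seg → ℕ
  | 0, _ => 0
  | k + 1, m =>
    match upSeqNbr m a b with
    | none => 0
    | some l => zelRemCountF a b k (m - (l : Multiset Seg)) + 1

/-- The number of removal upward sequences of maximal linked segments in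
neighbors ranging from `a-1` to `b` successively removed from `m`. -/
def zelRemCount (a b : ℤ) (m : Multiset Seg) : ℕ := zelRemCountF a b m.card m

def downNbrAux (m : Multiset Seg) : ℕ → Seg → Option (List Seg)
  | 0, p => some [p]
  | k + 1, p =>
    match msetMax (((endAt m (p.2 - 1)).filter fun Δ => Prec Δ p).map Prod.fst) with
    | none => none
    | some x => (downNbrAux m k (x, p.2 - 1)).map fun l => p :: l

/-- The Zelevinsky derivative algorithm `𝒟^Zel_{[a,b]}`; `none` codes `∞`. -/
def DZel (a b : ℤ) (m : Multiset Seg) : Option (Multiset Seg) :=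
  match shortEnd (zelRem a b m) b with
  | none => none
  | some Δb =>
    match downNbrAux (zelRem a b m) (b - a).toNat Δb with
    | none => none
    | some l => some (l.foldl (fun acc Δ => pushSeg (acc.erase Δ) Δ.1 (Δ.2 - 1)) m)

/-- The downward sequence of minimal linked segments in neighbors on `m`
ranging from `b` to `a-1` (if it exists). -/
def downSeqNbr (m : Multiset Seg) (a b : ℤ) : Option (List Seg) :=
  match shortEnd m b with
  | none => none
  | some Δ => downNbrAux m (b - (a - 1)).toNat Δ

def izRemF (a b : ℤ) : ℕ → Multiset Seg → Multiset Seg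
  | 0, m => m
  | k + 1, m =>
    match downSeqNbr m a b with
    | none => m
    | some l => izRemF a b k (m - (l : Multiset Seg))

/-- Repeatedly remove downward sequences of minimal linked segments in
neighbors ranging from `b` to `a-1`, until none exists. -/
def izRem (a b : ℤ) (m : Multiset Seg) : Multiset Seg := izRemF a b m.card m

def extNext (m : Multiset Seg) (p : Seg) : Option Seg :=
  (msetMin (((endAt m (p.2 + 1)).filter fun Δ => Prec p Δ).map Prod.fst)).map
    fun x => (x, p.2 + 1)

def extAux (m : Multiset Seg) : ℕ → Option Seg → List (Option Seg)
  | 0, _ => []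
  | k + 1, p =>
    let cur := p.bind (extNext m)
    cur :: extAux m k cur

/-- The (possibly void) segments `Δ̃_{a-1}, …, Δ̃_{b-1}` participating in the
extension process of the Zelevinsky integral algorithm on `m`. -/
def extList (m : Multiset Seg) (a b : ℤ) : List (Option Seg) :=
  longEnd m (a - 1) :: extAux m (b - a).toNat (longEnd m (a - 1))

def applyExt : Multiset Seg → ℤ → List (Option Seg) → Multiset Seg
  | acc, _, [] => acc
  | acc, i, some Δ :: rest => applyExt (pushSeg (acc.erase Δ) Δ.1 (Δ.2 + 1)) (i + 1) rest
  | acc, i, none :: rest => applyExt (acc + {(i + 1, i + 1)}) (i + 1) rest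

/-- The Zelevinsky integral algorithm `ℐ^Zel_{[a,b]}`. -/
def IZel (a b : ℤ) (m : Multiset Seg) : Multiset Seg :=
  applyExt m (a - 1) (extList (izRem a b m) a b)

/-- `Δ̃⁺` for a possibly void `Δ̃` at position `i` (for the void segment at
position `i` this is the singleton `[i+1,i+1]`). -/
def plusAt (i : ℤ) : Option Seg → Seg
  | some Δ => (Δ.1, Δ.2 + 1)
  | none => (i + 1, i + 1)

def plusList : ℤ → List (Option Seg) → List Seg
  | _, [] => []
  | i, o :: rest => plusAt i o :: plusList (i + 1) rest

/-- `n₁` and `n₂` are linked by mapping: there is an injective map `f : n₁ → n₂`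
with `Δ ≺ f(Δ)` for all `Δ ∈ n₁`. -/
def LinkedByMapping (n₁ n₂ : Multiset Seg) : Prop :=
  ∃ n₂' ≤ n₂, Multiset.Rel Prec n₁ n₂'

def startsSorted (n : Multiset Seg) : List ℤ := (n.map Prod.fst).sort (· ≤ ·)

/-- `n₁' < n₁` for multisegments of segments ending at a common point, compared
via their sorted lists of starting points. -/
def MSLtStarts (n₁' n₁ : Multiset Seg) : Prop :=
  startsSorted n₁' ≠ startsSorted n₁ ∧
    List.Forall₂ (· ≤ ·) (startsSorted n₁) (startsSorted n₁')

/-- `n₁ ⊆ m⟨k-1⟩` and `n₂ ⊆ m⟨k⟩` are minimally linked in `m`. -/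
def MinLinked (m : Multiset Seg) (k : ℤ) (n₁ n₂ : Multiset Seg) : Prop :=
  n₁ ≤ endAt m (k - 1) ∧ n₂ ≤ endAt m k ∧ LinkedByMapping n₁ n₂ ∧
    (∀ n₁' ≤ endAt m (k - 1), LinkedByMapping n₁' n₂ → n₁'.card ≤ n₁.card) ∧
    (∀ n₁' ≤ endAt m (k - 1), n₁'.card = n₁.card → MSLtStarts n₁' n₁ →
      ¬LinkedByMapping n₁' n₂)

/-- The non-free sections of a row of an upward-sequence decomposition. -/
def nfRow : List Seg → Multiset Seg
  | [] => 0
  | [_] => 0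
  | Δ :: Δ' :: rest => pushSeg (nfRow (Δ' :: rest)) (Δ'.1 - 1) Δ.2

/-- `𝔡(m)`, the sum of all non-free sections. -/
def frakd (m : Multiset Seg) : Multiset Seg :=
  (usDecomp m.card m).foldl (fun acc row => acc + nfRow row) 0

def DrhoPow (t : ℤ) : ℕ → Multiset Seg → Option (Multiset Seg)
  | 0, m => some m
  | k + 1, m => (Drho t m).bind (DrhoPow t k)

/-- `(𝒟_{[a+n-1]})^{ε_{a+n-1}} ∘ ⋯ ∘ (𝒟_{[a]})^{ε_a}(m)` where at each stage `t`
the exponent is `ε_t = ε_{[t]}` of the current multisegment; `none` codes that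
some derivative in the composition is `∞`. -/
def hdComp : ℕ → ℤ → Multiset Seg → Option (Multiset Seg)
  | 0, _, m => some m
  | k + 1, t, m =>
    match DrhoPow t (epsA t m) m with
    | none => none
    | some m' => hdComp k (t + 1) m'


/-! ### Auxiliary material for statement 9 -/

section Stmt9Aux

open Multiset

/-- The map `Θ ∘ 𝔻_r` on individual segments. -/
def phi (r : ℤ) (Δ : Seg) : Seg := (1 - Δ.1, r - Δ.2 - 1)

lemma phi_inj (r : ℤ) : Function.Injective (phi r) := by
  rintro ⟨x1, x2⟩ ⟨y1, y2⟩ h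
  simp only [phi, Prod.mk.injEq] at h ⊢
  omega

lemma msetMin_mem {s : Multiset ℤ} {y : ℤ} (h : msetMin s = some y) : y ∈ s := by
  unfold msetMin at h
  by_cases h0 : s = 0
  · rw [dif_pos h0] at h; cases h
  · rw [dif_neg h0] at h
    injection h with h
    rw [← h]
    have hmem := Finset.min'_mem s.toFinset (Multiset.toFinset_nonempty.mpr h0)
    rwa [Multiset.mem_toFinset] at hmem

lemma msetMax_mem {s : Multiset ℤ} {y : ℤ} (h : msetMax s = some y) : y ∈ s := by
  unfold msetMax at h
  by_cases h0 : s = 0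
  · rw [dif_pos h0] at h; cases h
  · rw [dif_neg h0] at h
    injection h with h
    rw [← h]
    have hmem := Finset.max'_mem s.toFinset (Multiset.toFinset_nonempty.mpr h0)
    rwa [Multiset.mem_toFinset] at hmem

lemma msetMax_map_neg (r : ℤ) (s : Multiset ℤ) :
    msetMax (s.map fun e => r - e - 1) = (msetMin s).map fun e => r - e - 1 := by
  unfold msetMax msetMin
  by_cases h : s = 0
  · subst h; simp
  · have h' : s.map (fun e => r - e - 1) ≠ 0 := by simpa using h
    rw [dif_neg h', dif_neg h, Option.map_some]
    congr 1
    apply le_antisymm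
    · apply Finset.max'_le
      intro y hy
      rw [Multiset.toFinset_map, Finset.mem_image] at hy
      obtain ⟨x, hx, rfl⟩ := hy
      have := Finset.min'_le s.toFinset x hx
      omega
    · apply Finset.le_max'
      rw [Multiset.toFinset_map]
      exact Finset.mem_image_of_mem _ (Finset.min'_mem _ _)

lemma msetMin_map_neg (r : ℤ) (s : Multiset ℤ) :
    msetMin (s.map fun e => r - e - 1) = (msetMax s).map fun e => r - e - 1 := by
  unfold msetMax msetMin
  by_cases h : s = 0
  · subst h; simp
  · have h' : s.map (fun e => r - e - 1) ≠ 0 := by simpa using h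
    rw [dif_neg h', dif_neg h, Option.map_some]
    congr 1
    apply le_antisymm
    · apply Finset.min'_le
      rw [Multiset.toFinset_map]
      exact Finset.mem_image_of_mem _ (Finset.max'_mem _ _)
    · apply Finset.le_min'
      intro y hy
      rw [Multiset.toFinset_map, Finset.mem_image] at hy
      obtain ⟨x, hx, rfl⟩ := hy
      have := Finset.le_max' s.toFinset x hx
      omega

lemma startAt_map_phi (r : ℤ) (n : Multiset Seg) (i j : ℤ) (hij : i = 1 - j) :
    startAt (n.map (phi r)) i = (startAt n j).map (phi r) := by
  unfold startAt
  rw [Multiset.filter_map]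
  congr 1
  apply Multiset.filter_congr
  intro Δ _
  simp only [Function.comp_apply, phi]
  constructor <;> intro h <;> omega

lemma snd_map_phi (r : ℤ) (s : Multiset Seg) :
    (s.map (phi r)).map Prod.snd = (s.map Prod.snd).map fun e => r - e - 1 := by
  rw [Multiset.map_map, Multiset.map_map]
  rfl

lemma mem_of_msetMin_snd {n : Multiset Seg} {i y : ℤ}
    (h : msetMin ((startAt n i).map Prod.snd) = some y) : (i, y) ∈ n := by
  have := msetMin_mem h
  rw [Multiset.mem_map] at this
  obtain ⟨Δ, hΔ, h2⟩ := this
  rw [startAt, Multiset.mem_filter] at hΔ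
  have : Δ = (i, y) := by rw [Prod.ext_iff]; exact ⟨hΔ.2, h2⟩
  rw [← this]; exact hΔ.1

lemma mem_of_msetMax_snd {n : Multiset Seg} {i y : ℤ}
    (h : msetMax ((startAt n i).map Prod.snd) = some y) : (i, y) ∈ n := by
  have := msetMax_mem h
  rw [Multiset.mem_map] at this
  obtain ⟨Δ, hΔ, h2⟩ := this
  rw [startAt, Multiset.mem_filter] at hΔ
  have : Δ = (i, y) := by rw [Prod.ext_iff]; exact ⟨hΔ.2, h2⟩
  rw [← this]; exact hΔ.1

/-- The invariant needed on `n` for the duality between `tds` and `tus`. -/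
def InvP (a E : ℤ) (n : Multiset Seg) : Prop :=
  ∀ Δ ∈ n, Δ.2 ≤ E ∧ (Δ.1 ≤ a + 1 → a ≤ Δ.2)

lemma InvP_mono {a E : ℤ} {s n : Multiset Seg} (hle : s ≤ n) (hn : InvP a E n) :
    InvP a E s := fun Δ hΔ => hn Δ (Multiset.mem_of_le hle hΔ)

lemma tds_tus_step (a E r : ℤ) (hr : E - a + 2 ≤ r) (n : Multiset Seg) (hn : InvP a E n) :
    tdsStep (n.map (phi r)) (-a) = (tusStep n a).map (Multiset.map (phi r)) := by
  unfold tdsStep tusStep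
  unfold longStart shortStart
  rw [startAt_map_phi r n (-a + 1) a (by ring), snd_map_phi, msetMax_map_neg]
  cases h0 : msetMin ((startAt n a).map Prod.snd) with
  | none => simp [h0]
  | some y0 =>
    have hy0 : (a, y0) ∈ n := mem_of_msetMin_snd h0
    obtain ⟨hy0E, hay0⟩ := hn _ hy0
    have hay0' : a ≤ y0 := hay0 (by omega)
    simp only [h0, Option.map_some]
    have hfil : (startAt (n.map (phi r)) (-a)).filter (fun Δ => Prec Δ (-a + 1, r - y0 - 1))
        = ((startAt n (a + 1)).filter fun Δ => Prec (a, y0) Δ).map (phi r) := by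
      rw [startAt_map_phi r n (-a) (a + 1) (by ring), Multiset.filter_map]
      congr 1
      apply Multiset.filter_congr
      intro Δ hΔ
      rw [startAt, Multiset.mem_filter] at hΔ
      obtain ⟨hΔE, _⟩ := hn Δ hΔ.1
      simp only [Function.comp_apply, Prec, phi]
      constructor <;> intro h <;> [skip; skip] <;>
        · obtain ⟨h1, h2, h3⟩ := h
          refine ⟨by omega, by omega, by omega⟩
    rw [hfil, snd_map_phi, msetMax_map_neg]
    cases h1 : msetMin (((startAt n (a + 1)).filter fun Δ => Prec (a, y0) Δ).map Prod.snd) with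
    | none => simp [h1]
    | some y1 =>
      simp only [h1, Option.map_some]
      congr 1
      have h2 : ((-a : ℤ), r - y1 - 1) = phi r (a + 1, y1) := by
        show ((-a : ℤ), r - y1 - 1) = (1 - (a + 1), r - y1 - 1)
        rw [Prod.mk.injEq]
        exact ⟨by ring, rfl⟩
      have h3 : ((-a : ℤ) + 1, r - y0 - 1) = phi r (a, y0) := by
        show ((-a : ℤ) + 1, r - y0 - 1) = (1 - a, r - y0 - 1)
        rw [Prod.mk.injEq]
        exact ⟨by ring, rfl⟩
      rw [h2, h3, ← Multiset.map_erase _ (phi_inj r), ← Multiset.map_erase _ (phi_inj r),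
        Multiset.erase_comm]

lemma tusStep_le {a : ℤ} {n n' : Multiset Seg} (h : tusStep n a = some n') : n' ≤ n := by
  unfold tusStep at h
  cases h0 : shortStart n a with
  | none => rw [h0] at h; simp at h
  | some Δ' =>
    rw [h0] at h
    dsimp only at h
    cases h1 : msetMin (((startAt n (a + 1)).filter fun Δ => Prec Δ' Δ).map Prod.snd) with
    | none => rw [h1] at h; simp at h
    | some y =>
      rw [h1] at h
      simp only [Option.some.injEq] at h
      rw [← h]
      exact le_trans (Multiset.erase_le _ _) (Multiset.erase_le _ _)

lemma shortStart_shape {n : Multiset Seg} {i : ℤ} {Δ : Seg} (h : shortStart n i = some Δ) :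
    Δ.1 = i ∧ msetMin ((startAt n i).map Prod.snd) = some Δ.2 := by
  unfold shortStart at h
  cases h0 : msetMin ((startAt n i).map Prod.snd) with
  | none => rw [h0] at h; simp at h
  | some y => rw [h0] at h; simp only [Option.map_some, Option.some.injEq] at h; subst h; exact ⟨rfl, rfl⟩

lemma longStart_shape {n : Multiset Seg} {i : ℤ} {Δ : Seg} (h : longStart n i = some Δ) :
    Δ.1 = i ∧ msetMax ((startAt n i).map Prod.snd) = some Δ.2 := by
  unfold longStart at h
  cases h0 : msetMax ((startAt n i).map Prod.snd) with
  | none => rw [h0] at h; simp at h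
  | some y => rw [h0] at h; simp only [Option.map_some, Option.some.injEq] at h; subst h; exact ⟨rfl, rfl⟩

lemma tusStep_card {a : ℤ} {n n' : Multiset Seg} (h : tusStep n a = some n') :
    Multiset.card n' < Multiset.card n := by
  unfold tusStep at h
  cases h0 : shortStart n a with
  | none => rw [h0] at h; simp at h
  | some Δ' =>
    rw [h0] at h
    dsimp only at h
    obtain ⟨h0a, h0b⟩ := shortStart_shape h0
    have hmem : (a, Δ'.2) ∈ n := mem_of_msetMin_snd h0b
    have hΔ' : Δ' = (a, Δ'.2) := by rw [Prod.ext_iff]; exact ⟨h0a, rfl⟩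
    cases h1 : msetMin (((startAt n (a + 1)).filter fun Δ => Prec Δ' Δ).map Prod.snd) with
    | none => rw [h1] at h; simp at h
    | some y =>
      rw [h1] at h
      simp only [Option.some.injEq] at h
      rw [← h]
      calc Multiset.card ((n.erase Δ').erase (a + 1, y)) ≤ Multiset.card (n.erase Δ') :=
            Multiset.card_erase_le
        _ < Multiset.card n := by rw [hΔ']; exact Multiset.card_erase_lt_of_mem hmem

lemma tds_tus_iterF (a E r : ℤ) (hr : E - a + 2 ≤ r) :
    ∀ (k : ℕ) (n : Multiset Seg), InvP a E n →
      tdsIterF (-a) k (n.map (phi r)) = (tusIterF a k n).map (phi r) := by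
  intro k
  induction k with
  | zero => intro n _; rfl
  | succ k ih =>
    intro n hn
    rw [tdsIterF, tusIterF, tds_tus_step a E r hr n hn]
    cases h : tusStep n a with
    | none => simp
    | some n' =>
      simp only [Option.map_some]
      exact ih n' (InvP_mono (tusStep_le h) hn)

lemma tusIterF_le (a : ℤ) : ∀ (k : ℕ) (n : Multiset Seg), tusIterF a k n ≤ n := by
  intro k
  induction k with
  | zero => intro n; exact le_refl n
  | succ k ih =>
    intro n
    rw [tusIterF]
    cases h : tusStep n a with
    | none => exact le_refl n
    | some n' => exact le_trans (ih n') (tusStep_le h)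

lemma tusIterF_stab (a : ℤ) : ∀ (k : ℕ) (n : Multiset Seg), Multiset.card n ≤ k →
    tusIterF a (k + 1) n = tusIterF a k n := by
  intro k
  induction k with
  | zero =>
    intro n hcard
    have hn : n = 0 := by
      rw [← Multiset.card_eq_zero]; omega
    subst hn
    have hstep : tusStep (0 : Multiset Seg) a = none := by
      unfold tusStep shortStart startAt msetMin
      simp
    simp only [tusIterF, hstep]
  | succ k ih =>
    intro n hcard
    rw [tusIterF]
    conv_rhs => rw [tusIterF]
    cases h : tusStep n a with
    | none => rfl
    | some n' =>
      have := tusStep_card h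
      exact ih n' (by omega)

lemma startAt_add_single (n : Multiset Seg) (x : Seg) (i : ℤ) (hx : x.1 ≠ i) :
    startAt (n + {x}) i = startAt n i := by
  unfold startAt
  simp [Multiset.filter_add, Multiset.filter_singleton, hx]

lemma erase_add_single (s : Multiset Seg) (x y : Seg) (h : x ≠ y) :
    (s + {x}).erase y = s.erase y + {x} := by
  rw [add_comm s {x}, Multiset.singleton_add, Multiset.erase_cons_tail _ h,
    add_comm (s.erase y) {x}, Multiset.singleton_add]

lemma tusStep_add (a : ℤ) (n : Multiset Seg) (x : Seg) (h1 : x.1 ≠ a) (h2 : x.1 ≠ a + 1) :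
    tusStep (n + {x}) a = (tusStep n a).map (· + {x}) := by
  unfold tusStep shortStart
  rw [startAt_add_single n x a h1, startAt_add_single n x (a + 1) h2]
  cases h0 : msetMin ((startAt n a).map Prod.snd) with
  | none => simp [h0]
  | some y0 =>
    simp only [h0, Option.map_some]
    cases hh : msetMin (((startAt n (a + 1)).filter fun Δ => Prec (a, y0) Δ).map Prod.snd) with
    | none => simp [hh]
    | some y1 =>
      simp only [hh, Option.map_some, Option.some.injEq]
      rw [erase_add_single n x (a, y0) (by intro he; apply h1; rw [he]),
        erase_add_single _ x (a + 1, y1) (by intro he; apply h2; rw [he])]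

lemma tusIterF_add (a : ℤ) (x : Seg) (h1 : x.1 ≠ a) (h2 : x.1 ≠ a + 1) :
    ∀ (k : ℕ) (n : Multiset Seg), tusIterF a k (n + {x}) = tusIterF a k n + {x} := by
  intro k
  induction k with
  | zero => intro n; rfl
  | succ k ih =>
    intro n
    rw [tusIterF, tusIterF, tusStep_add a n x h1 h2]
    cases h : tusStep n a with
    | none => rfl
    | some n' => simp only [Option.map_some]; exact ih n'

lemma tusIter_add (a : ℤ) (n : Multiset Seg) (x : Seg) (h1 : x.1 ≠ a) (h2 : x.1 ≠ a + 1) :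
    tusIter a (n + {x}) = tusIter a n + {x} := by
  unfold tusIter
  rw [Multiset.card_add, Multiset.card_singleton, tusIterF_add a x h1 h2,
    tusIterF_stab a (Multiset.card n) n (le_refl _)]

lemma longStart_add (n : Multiset Seg) (x : Seg) (i : ℤ) (hx : x.1 ≠ i) :
    longStart (n + {x}) i = longStart n i := by
  unfold longStart
  rw [startAt_add_single n x i hx]

lemma pushSeg_add (s : Multiset Seg) (x : Seg) (u v : ℤ) :
    pushSeg (s + {x}) u v = pushSeg s u v + {x} := by
  unfold pushSeg
  split_ifs with h
  · rw [add_right_comm]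
  · rfl

lemma irho_some {a : ℤ} {n : Multiset Seg} {Δ : Seg}
    (h : longStart (tusIter a n) (a + 1) = some Δ) :
    Irho a n = pushSeg (n.erase Δ) a Δ.2 := by
  unfold Irho
  rw [h]

lemma drho_dual (a E r : ℤ) (hr : E - a + 2 ≤ r) (n : Multiset Seg) (hn : InvP a E n)
    (Δ : Seg) (h : longStart (tusIter a n) (a + 1) = some Δ) :
    Drho (-a) (n.map (phi r)) = some ((Irho a n).map (phi r)) := by
  obtain ⟨hΔ1, hmax⟩ := longStart_shape h
  have hΔmem : Δ ∈ tusIter a n := by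
    have := mem_of_msetMax_snd hmax
    have hΔ : Δ = (a + 1, Δ.2) := by rw [Prod.ext_iff]; exact ⟨hΔ1, rfl⟩
    rw [hΔ]; exact this
  have hΔn : Δ ∈ n := Multiset.mem_of_le (tusIterF_le a _ n) hΔmem
  obtain ⟨hyE, hay⟩ := hn Δ hΔn
  have hay' : a ≤ Δ.2 := hay (by omega)
  unfold Drho
  have hiter : tdsIter (-a) (n.map (phi r)) = (tusIter a n).map (phi r) := by
    unfold tdsIter tusIter
    rw [Multiset.card_map]
    exact tds_tus_iterF a E r hr _ n hn
  rw [hiter]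
  have hss : shortStart ((tusIter a n).map (phi r)) (-a) = some (-a, r - Δ.2 - 1) := by
    unfold shortStart
    rw [startAt_map_phi r _ (-a) (a + 1) (by ring), snd_map_phi, msetMin_map_neg, hmax]
    rfl
  rw [hss]
  simp only [Option.map_some, Option.some.injEq]
  rw [irho_some h]
  have hφΔ : ((-a : ℤ), r - Δ.2 - 1) = phi r Δ := by
    show ((-a : ℤ), r - Δ.2 - 1) = (1 - Δ.1, r - Δ.2 - 1)
    rw [Prod.mk.injEq]
    exact ⟨by omega, rfl⟩
  rw [hφΔ, ← Multiset.map_erase _ (phi_inj r)]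
  unfold pushSeg
  rw [if_pos (by omega : (-a : ℤ) + 1 ≤ r - Δ.2 - 1), if_pos hay', Multiset.map_add]
  congr 1
  have h4 : phi r (a, Δ.2) = (-a + 1, r - Δ.2 - 1) := by
    show ((1 : ℤ) - a, r - Δ.2 - 1) = (-a + 1, r - Δ.2 - 1)
    rw [Prod.mk.injEq]
    exact ⟨by ring, rfl⟩
  rw [Multiset.map_singleton, h4]

lemma irho_card_some (a : ℤ) (n : Multiset Seg) (h : (Irho a n).card = n.card) :
    ∃ Δ, longStart (tusIter a n) (a + 1) = some Δ := by
  cases h' : longStart (tusIter a n) (a + 1) with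
  | some Δ => exact ⟨Δ, rfl⟩
  | none =>
    exfalso
    unfold Irho at h
    rw [h'] at h
    simp at h

lemma theta_dual (r : ℤ) (m : Multiset Seg) : Theta (Dual r m) = m.map (phi r) := by
  unfold Theta Dual
  rw [Multiset.map_map]
  apply Multiset.map_congr rfl
  intro x _
  simp only [Function.comp_apply, phi, Prod.mk.injEq]
  constructor <;> ring

lemma theta_map_phi (r : ℤ) (s : Multiset Seg) : Theta (s.map (phi r)) = Dual r s := by
  unfold Theta Dual
  rw [Multiset.map_map]
  apply Multiset.map_congr rfl
  intro x _
  simp only [Function.comp_apply, phi, Prod.mk.injEq]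
  constructor <;> ring

end Stmt9Aux

/-- for `b > a`, `m` in good range for `[a,b]` and all sufficiently
large `r > 0`: if `|ℐ_{[a]}(m)| = |m|` then
`𝒟^{Lang,L}_{[a]}(𝔻_r(m)) = 𝔻_r(ℐ_{[a]}(m))` and
`𝒟^{Lang,L}_{[a]}(𝔻_r^{[a,b]}(m)) = 𝔻_r^{[a,b]}(ℐ_{[a]}(m))`. -/
theorem stmt9 (m : Multiset Seg) (hm : IsMS m) (a b : ℤ) (hab : a < b)
    (hgr : GoodRange m a b) :
    ∃ R : ℤ, 0 < R ∧ ∀ r : ℤ, R ≤ r →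
      (Irho a m).card = m.card →
        DrhoL a (Dual r m) = some (Dual r (Irho a m)) ∧
          DrhoL a (DualAB r a b m) = some (DualAB r a b (Irho a m)) := by
  classical
  set E : ℤ := b + (m.map fun Δ => Δ.2 - b).sum with hE
  have hmem : ∀ Δ ∈ m, a ≤ Δ.1 ∧ Δ.1 ≤ b + 1 ∧ b ≤ Δ.2 := by
    intro Δ hΔ
    rw [← hgr] at hΔ
    exact (Multiset.mem_filter.mp hΔ).2
  have hsum0 : (0 : ℤ) ≤ (m.map fun Δ => Δ.2 - b).sum := by
    apply Multiset.sum_nonneg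
    intro x hx
    obtain ⟨Δ, hΔ, rfl⟩ := Multiset.mem_map.mp hx
    have := (hmem Δ hΔ).2.2
    omega
  have hEb : b ≤ E := by omega
  have hEm : ∀ Δ ∈ m, Δ.2 ≤ E := by
    intro Δ hΔ
    have h1 : Δ.2 - b ≤ (m.map fun Δ => Δ.2 - b).sum := by
      apply Multiset.single_le_sum
      · intro x hx
        obtain ⟨Δ', hΔ', rfl⟩ := Multiset.mem_map.mp hx
        have := (hmem Δ' hΔ').2.2
        omega
      · exact Multiset.mem_map_of_mem _ hΔ
    omega
  refine ⟨E - a + 2, by omega, ?_⟩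
  intro r hr hcard
  have hInv : InvP a E m := by
    intro Δ hΔ
    exact ⟨hEm Δ hΔ, fun _ => by have := (hmem Δ hΔ).2.2; omega⟩
  obtain ⟨Δ, hΔ⟩ := irho_card_some a m hcard
  constructor
  · unfold DrhoL
    rw [theta_dual, drho_dual a E r hr m hInv Δ hΔ, Option.map_some, theta_map_phi]
  · set x : Seg := (b + 1, b) with hx
    have hx1 : x.1 ≠ a := by simp [hx]; omega
    have hx2 : x.1 ≠ a + 1 := by simp [hx]; omega
    have hΔ1 : Δ.1 = a + 1 := (longStart_shape hΔ).1
    have hInv' : InvP a E (m + {x}) := by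
      intro Δ' hΔ'
      rcases Multiset.mem_add.mp hΔ' with h | h
      · exact hInv Δ' h
      · rw [Multiset.mem_singleton] at h
        subst h
        exact ⟨hEb, fun hc => by simp [hx] at hc ⊢; omega⟩
    have htheta : Theta (DualAB r a b m) = (m + {x}).map (phi r) := by
      unfold DualAB Theta
      rw [Multiset.map_add, Multiset.map_add]
      rw [← Theta, ← Theta, theta_dual]
      congr 1
      unfold Theta
      rw [Multiset.map_singleton, Multiset.map_singleton, Multiset.singleton_inj]
      show ((-b : ℤ), -(b - r + 1)) = phi r (b + 1, b)
      show ((-b : ℤ), -(b - r + 1)) = (1 - (b + 1), r - b - 1)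
      rw [Prod.mk.injEq]
      exact ⟨by ring, by ring⟩
    have hls : longStart (tusIter a (m + {x})) (a + 1) = some Δ := by
      rw [tusIter_add a m x hx1 hx2, longStart_add _ x _ hx2]
      exact hΔ
    unfold DrhoL
    rw [htheta, drho_dual a E r hr (m + {x}) hInv' Δ hls, Option.map_some, theta_map_phi]
    congr 1
    have hIadd : Irho a (m + {x}) = Irho a m + {x} := by
      rw [irho_some hls, irho_some hΔ, erase_add_single m x Δ (by
        intro he; exact hx2 (by rw [he, hΔ1])), pushSeg_add]
    rw [hIadd]
    unfold DualAB Dual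
    rw [Multiset.map_add]
    congr 1
    rw [Multiset.map_singleton, Multiset.singleton_inj]
    show ((-r + (b + 1, b).2 + 1 : ℤ), (b + 1, b).1 - 1) = (b - r + 1, b)
    rw [Prod.mk.injEq]
    exact ⟨by ring, by ring⟩

end Multiseg
end

section
/- Let m be a nonempty multisegment with maximal end c (the largest integer with m⟨c⟩ ≠ ∅), and let r ≥ 1 be such that (D^MW)^{r−1}(m) still has maximal end c. For 1 ≤ i ≤ r, let Δ_{c,i}, Δ_{c−1,i}, …, Δ_{a_i,i} be the ordered segments participating in the MW algorithm for (D^MW)^{i−1}(m) (so e(Δ_{k,i}) = k), and set m₀ = m and m_i = m_{i−1} − Δ_{c,i} − ⋯ − Δ_{a_i,i}. Then: (i) the ordered segments participating in the MW algorithm for m_i are exactly Δ_{c,i+1}, …, Δ_{a_{i+1},i+1}; in particular {Δ_{c,1}, …, Δ_{a_1,1}, …, Δ_{c,r}, …, Δ_{a_r,r}} is a submultisegment of m. (ii) Writing Δ(m) = [a,c] for the first segment produced by the MW algorithm for m, and for a ≤ k ≤ c setting MW_k(m) = {Δ_{k,1}, …, Δ_{k,x_k}} with x_k the largest index for which Δ_{k,x_k}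 is defined: (a) x_c ≥ x_{c−1} ≥ ⋯ ≥ x_a; (b) Δ_{k,1}, …, Δ_{k,x_k} are in increasing order; (c) for a ≤ k ≤ c−1, MW_k(m) and MW_{k+1}(m) are minimally linked in m. -/
namespace Multiseg

/-! ### Basic lemmas -/

theorem msetMax_eq_some {s : Multiset ℤ} {x : ℤ} :
    msetMax s = some x ↔ x ∈ s ∧ ∀ y ∈ s, y ≤ x := by
  unfold msetMax
  split
  · rename_i h; subst h; simp
  · rename_i h
    constructor
    · rintro ⟨rfl⟩
      constructor
      · simpa using Finset.max'_mem s.toFinset (Multiset.toFinset_nonempty.mpr h)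
      · intro y hy
        exact Finset.le_max' _ _ (Multiset.mem_toFinset.mpr hy)
    · rintro ⟨hx, hmax⟩
      simp only [Option.some.injEq]
      apply le_antisymm
      · exact hmax _ (by simpa using Finset.max'_mem s.toFinset (Multiset.toFinset_nonempty.mpr h))
      · exact Finset.le_max' _ _ (Multiset.mem_toFinset.mpr hx)

theorem msetMax_eq_none {s : Multiset ℤ} : msetMax s = none ↔ s = 0 := by
  unfold msetMax; split <;> simp_all

theorem mem_endAt {m : Multiset Seg} {i : ℤ} {Δ : Seg} :
    Δ ∈ endAt m i ↔ Δ ∈ m ∧ Δ.2 = i := by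
  unfold endAt; simp [Multiset.mem_filter]

theorem shortEnd_eq_some {m : Multiset Seg} {b : ℤ} {Δ : Seg} :
    shortEnd m b = some Δ ↔
      Δ ∈ m ∧ Δ.2 = b ∧ ∀ Δ' ∈ m, Δ'.2 = b → Δ'.1 ≤ Δ.1 := by
  unfold shortEnd
  constructor
  · intro h
    rcases Option.map_eq_some_iff.mp h with ⟨x, hx, rfl⟩
    rcases msetMax_eq_some.mp hx with ⟨hmem, hmax⟩
    rcases Multiset.mem_map.mp hmem with ⟨Δ', hΔ', hfst⟩
    rcases mem_endAt.mp hΔ' with ⟨hΔm, hend⟩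
    have : Δ' = (x, b) := by
      cases Δ'; simp_all
    subst this
    refine ⟨hΔm, rfl, ?_⟩
    intro Δ'' h1 h2
    exact hmax _ (Multiset.mem_map.mpr ⟨Δ'', mem_endAt.mpr ⟨h1, h2⟩, rfl⟩)
  · rintro ⟨hmem, hend, hmax⟩
    have hΔ : Δ = (Δ.1, b) := by cases Δ; simp_all
    rw [Option.map_eq_some_iff]
    refine ⟨Δ.1, msetMax_eq_some.mpr ⟨?_, ?_⟩, by rw [← hΔ]⟩
    · exact Multiset.mem_map.mpr ⟨Δ, mem_endAt.mpr ⟨hmem, hend⟩, rfl⟩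
    · intro y hy
      rcases Multiset.mem_map.mp hy with ⟨Δ', hΔ', rfl⟩
      rcases mem_endAt.mp hΔ' with ⟨h1, h2⟩
      exact hmax _ h1 h2

theorem shortEnd_eq_none {m : Multiset Seg} {b : ℤ} :
    shortEnd m b = none ↔ endAt m b = 0 := by
  unfold shortEnd
  rw [Option.map_eq_none_iff, msetMax_eq_none, Multiset.map_eq_zero]

theorem mwNext_eq_some {m : Multiset Seg} {p Δ : Seg} :
    mwNext m p = some Δ ↔
      Δ ∈ m ∧ Δ.2 = p.2 - 1 ∧ Prec Δ p ∧
        ∀ Δ' ∈ m, Δ'.2 = p.2 - 1 → Prec Δ' p → Δ'.1 ≤ Δ.1 := by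
  unfold mwNext
  constructor
  · intro h
    rcases Option.map_eq_some_iff.mp h with ⟨x, hx, rfl⟩
    rcases msetMax_eq_some.mp hx with ⟨hmem, hmax⟩
    rcases Multiset.mem_map.mp hmem with ⟨Δ', hΔ', hfst⟩
    rcases Multiset.mem_filter.mp hΔ' with ⟨hΔe, hprec⟩
    rcases mem_endAt.mp hΔe with ⟨hΔm, hend⟩
    have : Δ' = (x, p.2 - 1) := by cases Δ'; simp_all
    subst this
    refine ⟨hΔm, rfl, hprec, ?_⟩
    intro Δ'' h1 h2 h3
    exact hmax _ (Multiset.mem_map.mpr ⟨Δ'', Multiset.mem_filter.mpr ⟨mem_endAt.mpr ⟨h1, h2⟩, h3⟩, rfl⟩)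
  · rintro ⟨hmem, hend, hprec, hmax⟩
    have hΔ : Δ = (Δ.1, p.2 - 1) := by cases Δ; simp_all
    rw [Option.map_eq_some_iff]
    refine ⟨Δ.1, msetMax_eq_some.mpr ⟨?_, ?_⟩, by rw [← hΔ]⟩
    · exact Multiset.mem_map.mpr ⟨Δ, Multiset.mem_filter.mpr ⟨mem_endAt.mpr ⟨hmem, hend⟩, hprec⟩, rfl⟩
    · intro y hy
      rcases Multiset.mem_map.mp hy with ⟨Δ', hΔ', rfl⟩
      rcases Multiset.mem_filter.mp hΔ' with ⟨h1, h2⟩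
      rcases mem_endAt.mp h1 with ⟨h3, h4⟩
      exact hmax _ h3 h4 h2

theorem mwNext_eq_none {m : Multiset Seg} {p : Seg} :
    mwNext m p = none ↔ ∀ Δ ∈ m, Δ.2 = p.2 - 1 → ¬Prec Δ p := by
  unfold mwNext
  rw [Option.map_eq_none_iff, msetMax_eq_none, Multiset.map_eq_zero, Multiset.filter_eq_nil]
  constructor
  · intro h Δ h1 h2 h3
    exact h Δ (mem_endAt.mpr ⟨h1, h2⟩) h3
  · intro h Δ h1 h2
    rcases mem_endAt.mp h1 with ⟨h3, h4⟩
    exact h Δ h3 h4 h2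
/-! ### Chain structure of `mwList` -/

inductive MWChain (m : Multiset Seg) : Seg → List Seg → Prop
  | nil (p : Seg) (h : mwNext m p = none) : MWChain m p []
  | cons (p Δ : Seg) (l : List Seg) (h : mwNext m p = some Δ) (hl : MWChain m Δ l) :
      MWChain m p (Δ :: l)

theorem mwChain_unique {m : Multiset Seg} {p : Seg} {l l' : List Seg}
    (h : MWChain m p l) (h' : MWChain m p l') : l = l' := by
  induction h generalizing l' with
  | nil p hp => cases h' with
    | nil => rfl
    | cons _ _ _ hq => rw [hp] at hq; cases hq
  | cons p Δ l hp hl ih =>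
    cases h' with
    | nil _ hq => rw [hp] at hq; cases hq
    | cons _ Δ' l' hq hl' =>
      rw [hp] at hq
      cases hq
      rw [ih hl']

theorem mwAux_chain_or_len (m : Multiset Seg) (fuel : ℕ) (p : Seg) :
    MWChain m p (mwAux m fuel p) ∨ (mwAux m fuel p).length = fuel := by
  induction fuel generalizing p with
  | zero => right; rfl
  | succ k ih =>
    unfold mwAux
    cases hn : mwNext m p with
    | none => left; exact MWChain.nil p hn
    | some Δ =>
      rcases ih Δ with h | h
      · left; exact MWChain.cons p Δ _ hn h
      · right; simp [h]

theorem mwAux_mem {m : Multiset Seg} {fuel : ℕ} {p : Seg} :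
    ∀ q ∈ mwAux m fuel p, q ∈ m := by
  induction fuel generalizing p with
  | zero => intro q hq; simp [mwAux] at hq
  | succ k ih =>
    intro q hq
    unfold mwAux at hq
    cases hn : mwNext m p with
    | none => simp [hn] at hq
    | some Δ =>
      rw [hn] at hq
      rcases List.mem_cons.mp hq with rfl | hq
      · exact (mwNext_eq_some.mp hn).1
      · exact ih q hq

theorem mwAux_ends (m : Multiset Seg) (fuel : ℕ) (p : Seg) :
    (mwAux m fuel p).map Prod.snd
      = (List.range (mwAux m fuel p).length).map (fun j : ℕ => p.2 - 1 - (j : ℤ)) := by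
  induction fuel generalizing p with
  | zero => rfl
  | succ k ih =>
    unfold mwAux
    cases hn : mwNext m p with
    | none => rfl
    | some Δ =>
      have hΔ : Δ.2 = p.2 - 1 := (mwNext_eq_some.mp hn).2.1
      simp only [List.map_cons, List.length_cons, ih Δ, List.range_succ_eq_map,
        List.map_cons, List.map_map]
      refine List.cons_eq_cons.mpr ⟨by simp [hΔ], ?_⟩
      apply List.map_congr_left
      intro j _
      simp only [Function.comp, hΔ]
      push_cast
      ring

theorem mwAux_nodup (m : Multiset Seg) (fuel : ℕ) (p : Seg) :
    (mwAux m fuel p).Nodup := by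
  have h := mwAux_ends m fuel p
  have : ((mwAux m fuel p).map Prod.snd).Nodup := by
    rw [h]
    apply List.Nodup.map
    · intro a b hab
      simp only at hab
      omega
    · exact List.nodup_range
  exact this.of_map
/-! ### mwList spec -/

theorem maxend_mem {m : Multiset Seg} {c : ℤ} (hc : msetMax (m.map Prod.snd) = some c) :
    ∃ Δ ∈ m, Δ.2 = c := by
  rcases msetMax_eq_some.mp hc with ⟨h1, _⟩
  rcases Multiset.mem_map.mp h1 with ⟨Δ, hΔ, hsnd⟩
  exact ⟨Δ, hΔ, hsnd⟩

theorem maxend_le {m : Multiset Seg} {c : ℤ} (hc : msetMax (m.map Prod.snd) = some c) :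
    ∀ Δ ∈ m, Δ.2 ≤ c := by
  rcases msetMax_eq_some.mp hc with ⟨_, h2⟩
  intro Δ hΔ
  exact h2 _ (Multiset.mem_map.mpr ⟨Δ, hΔ, rfl⟩)

theorem maxend_eq_some {m : Multiset Seg} {c : ℤ} :
    msetMax (m.map Prod.snd) = some c ↔ (∃ Δ ∈ m, Δ.2 = c) ∧ ∀ Δ ∈ m, Δ.2 ≤ c := by
  constructor
  · intro hc; exact ⟨maxend_mem hc, maxend_le hc⟩
  · rintro ⟨⟨Δ, hΔ, hend⟩, hle⟩
    apply msetMax_eq_some.mpr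
    constructor
    · exact Multiset.mem_map.mpr ⟨Δ, hΔ, hend⟩
    · intro y hy
      rcases Multiset.mem_map.mp hy with ⟨Δ', hΔ', rfl⟩
      exact hle _ hΔ'

theorem mwAux_end_lt {m : Multiset Seg} {fuel : ℕ} {p : Seg} :
    ∀ q ∈ mwAux m fuel p, q.2 < p.2 := by
  intro q hq
  have h := mwAux_ends m fuel p
  have : q.2 ∈ (mwAux m fuel p).map Prod.snd := List.mem_map.mpr ⟨q, hq, rfl⟩
  rw [h] at this
  rcases List.mem_map.mp this with ⟨j, _, hj⟩
  omega

theorem list_coe_le {α : Type} [DecidableEq α] {l : List α} {m : Multiset α}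
    (hnd : l.Nodup) (hmem : ∀ x ∈ l, x ∈ m) : (l : Multiset α) ≤ m := by
  rw [Multiset.le_iff_count]
  intro x
  by_cases hx : x ∈ l
  · have h1 : l.count x = 1 := List.count_eq_one_of_mem hnd hx
    have h2 : 1 ≤ m.count x := Multiset.one_le_count_iff_mem.mpr (hmem x hx)
    simpa [Multiset.coe_count, h1] using h2
  · simp [Multiset.coe_count, List.count_eq_zero_of_not_mem hx]

theorem mwList_spec {m : Multiset Seg} {c : ℤ} (hc : msetMax (m.map Prod.snd) = some c) :
    ∃ Δ0 t, mwList m = Δ0 :: t ∧ shortEnd m c = some Δ0 ∧ MWChain m Δ0 t := by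
  rcases maxend_mem hc with ⟨Δ, hΔ, hend⟩
  have hse : ∃ Δ0, shortEnd m c = some Δ0 := by
    cases h : shortEnd m c with
    | none =>
      exfalso
      have := shortEnd_eq_none.mp h
      have : Δ ∈ endAt m c := mem_endAt.mpr ⟨hΔ, hend⟩
      simp_all
    | some Δ0 => exact ⟨Δ0, rfl⟩
  rcases hse with ⟨Δ0, hΔ0⟩
  refine ⟨Δ0, mwAux m m.card Δ0, ?_, hΔ0, ?_⟩
  · unfold mwList
    rw [hc]
    simp only [hΔ0]
  · rcases mwAux_chain_or_len m m.card Δ0 with h | h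
    · exact h
    · exfalso
      rcases shortEnd_eq_some.mp hΔ0 with ⟨hΔ0m, _, _⟩
      have hnd : (Δ0 :: mwAux m m.card Δ0).Nodup := by
        refine List.nodup_cons.mpr ⟨?_, mwAux_nodup m m.card Δ0⟩
        intro hmem
        have := mwAux_end_lt _ hmem
        omega
      have hsub : (↑(Δ0 :: mwAux m m.card Δ0) : Multiset Seg) ≤ m := by
        apply list_coe_le hnd
        intro x hx
        rcases List.mem_cons.mp hx with rfl | hx
        · exact hΔ0m
        · exact mwAux_mem x hx
      have := Multiset.card_le_card hsub
      simp [h] at this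

theorem mwList_eq {m : Multiset Seg} {c : ℤ} {Δ0 : Seg} {t : List Seg}
    (hc : msetMax (m.map Prod.snd) = some c)
    (h0 : shortEnd m c = some Δ0) (ht : MWChain m Δ0 t) : mwList m = Δ0 :: t := by
  rcases mwList_spec hc with ⟨Δ0', t', heq, h0', ht'⟩
  rw [h0'] at h0
  cases h0
  rw [heq, mwChain_unique ht' ht]

theorem chain_succ {m : Multiset Seg} {p : Seg} {l : List Seg} (h : MWChain m p l) :
    ∀ Δ ∈ p :: l, mwNext m Δ = none ∨ ∃ Δ'' ∈ l, mwNext m Δ = some Δ'' := by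
  induction h with
  | nil q hq => intro Δ hΔ; simp at hΔ; subst hΔ; left; exact hq
  | cons q Δ₁ l h hl ih =>
    intro Δ hΔ
    rcases List.mem_cons.mp hΔ with rfl | hΔ
    · right; exact ⟨Δ₁, List.mem_cons_self, h⟩
    · rcases ih Δ hΔ with h' | ⟨Δ'', h1, h2⟩
      · left; exact h'
      · right; exact ⟨Δ'', List.mem_cons_of_mem _ h1, h2⟩

theorem chain_pred {m : Multiset Seg} {p : Seg} {l : List Seg} (h : MWChain m p l) :
    ∀ Δ ∈ l, ∃ q ∈ p :: l, mwNext m q = some Δ := by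
  induction h with
  | nil q hq => intro Δ hΔ; simp at hΔ
  | cons q Δ₁ l h hl ih =>
    intro Δ hΔ
    rcases List.mem_cons.mp hΔ with rfl | hΔ
    · exact ⟨q, List.mem_cons_self, h⟩
    · rcases ih Δ hΔ with ⟨q', h1, h2⟩
      exact ⟨q', List.mem_cons_of_mem _ h1, h2⟩
/-! ### Derived properties of mwList -/

section MWListProps

variable {m : Multiset Seg} {c : ℤ}

theorem mwList_mem (hc : msetMax (m.map Prod.snd) = some c) :
    ∀ Δ ∈ mwList m, Δ ∈ m := by
  rcases mwList_spec hc with ⟨Δ0, t, heq, h0, ht⟩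
  rw [heq]
  intro Δ hΔ
  rcases List.mem_cons.mp hΔ with rfl | hΔ
  · exact (shortEnd_eq_some.mp h0).1
  · rcases chain_pred ht Δ hΔ with ⟨q, _, hq⟩
    exact (mwNext_eq_some.mp hq).1

theorem mwList_nodup (hc : msetMax (m.map Prod.snd) = some c) :
    (mwList m).Nodup := by
  rcases mwList_spec hc with ⟨Δ0, t, heq, h0, ht⟩
  rw [heq]
  have h0' := shortEnd_eq_some.mp h0
  have hteq : t = mwAux m m.card Δ0 := by
    rcases mwList_spec hc with ⟨Δ0', t', heq', h0'', ht'⟩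
    have : mwList m = Δ0 :: mwAux m m.card Δ0 := by
      unfold mwList; rw [hc]; simp only [h0]
    rw [heq] at this
    exact (List.cons.injEq _ _ _ _ ▸ this).2
  refine List.nodup_cons.mpr ⟨?_, ?_⟩
  · rw [hteq]; intro hmem
    have := mwAux_end_lt _ hmem; omega
  · rw [hteq]; exact mwAux_nodup m m.card Δ0

theorem mwList_coe_le (hc : msetMax (m.map Prod.snd) = some c) :
    ((mwList m : List Seg) : Multiset Seg) ≤ m :=
  list_coe_le (mwList_nodup hc) (mwList_mem hc)

theorem mwList_end_le (hc : msetMax (m.map Prod.snd) = some c) :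
    ∀ Δ ∈ mwList m, Δ.2 ≤ c :=
  fun Δ hΔ => maxend_le hc Δ (mwList_mem hc Δ hΔ)

theorem mwList_head (hc : msetMax (m.map Prod.snd) = some c) :
    ∃ Δ0 ∈ mwList m, Δ0.2 = c ∧ ∀ Δ' ∈ m, Δ'.2 = c → Δ'.1 ≤ Δ0.1 := by
  rcases mwList_spec hc with ⟨Δ0, t, heq, h0, ht⟩
  rcases shortEnd_eq_some.mp h0 with ⟨h1, h2, h3⟩
  exact ⟨Δ0, heq ▸ List.mem_cons_self, h2, h3⟩

theorem mwList_pred (hc : msetMax (m.map Prod.snd) = some c) :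
    ∀ Δ ∈ mwList m, Δ.2 = c ∨ ∃ Δ' ∈ mwList m, mwNext m Δ' = some Δ := by
  rcases mwList_spec hc with ⟨Δ0, t, heq, h0, ht⟩
  rw [heq]
  intro Δ hΔ
  rcases List.mem_cons.mp hΔ with rfl | hΔ
  · left; exact (shortEnd_eq_some.mp h0).2.1
  · right
    rcases chain_pred ht Δ hΔ with ⟨q, hq1, hq2⟩
    exact ⟨q, hq1, hq2⟩

theorem mwList_succ (hc : msetMax (m.map Prod.snd) = some c) :
    ∀ Δ ∈ mwList m, mwNext m Δ = none ∨ ∃ Δ'' ∈ mwList m, mwNext m Δ = some Δ'' := by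
  rcases mwList_spec hc with ⟨Δ0, t, heq, h0, ht⟩
  rw [heq]
  intro Δ hΔ
  rcases chain_succ ht Δ hΔ with h | ⟨Δ'', h1, h2⟩
  · left; exact h
  · right; exact ⟨Δ'', List.mem_cons_of_mem _ h1, h2⟩

/-- ends are injective on `mwList`. -/
theorem mwList_end_inj (hc : msetMax (m.map Prod.snd) = some c) :
    ∀ Δ ∈ mwList m, ∀ Δ' ∈ mwList m, Δ.2 = Δ'.2 → Δ = Δ' := by
  rcases mwList_spec hc with ⟨Δ0, t, heq, h0, ht⟩
  have hteq : mwList m = Δ0 :: mwAux m m.card Δ0 := by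
    unfold mwList; rw [hc]; simp only [h0]
  have hends : ((mwList m).map Prod.snd).Nodup := by
    rw [hteq]
    simp only [List.map_cons]
    refine List.nodup_cons.mpr ⟨?_, ?_⟩
    · intro hmem
      rcases List.mem_map.mp hmem with ⟨q, hq, hq2⟩
      have := mwAux_end_lt _ hq; omega
    · rw [mwAux_ends]
      apply List.Nodup.map
      · intro a b hab; simp only at hab; omega
      · exact List.nodup_range
  intro Δ hΔ Δ' hΔ' hend
  exact List.inj_on_of_nodup_map hends hΔ hΔ' hend

/-- if `Δ ∈ mwList m` has end `< c` then the list contains a predecessor with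
end one higher, linked by `mwNext`. -/
theorem mwList_consec (hc : msetMax (m.map Prod.snd) = some c) :
    ∀ Δ ∈ mwList m, Δ.2 < c →
      ∃ Δ' ∈ mwList m, mwNext m Δ' = some Δ ∧ Δ'.2 = Δ.2 + 1 := by
  intro Δ hΔ hlt
  rcases mwList_pred hc Δ hΔ with h | ⟨Δ', h1, h2⟩
  · omega
  · have := (mwNext_eq_some.mp h2).2.1
    exact ⟨Δ', h1, h2, by omega⟩

/-- if no element of the list ends at `Δ.2 - 1` then `Δ` is the last one. -/
theorem mwList_stop (hc : msetMax (m.map Prod.snd) = some c) :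
    ∀ Δ ∈ mwList m, (∀ Δ'' ∈ mwList m, Δ''.2 ≠ Δ.2 - 1) → mwNext m Δ = none := by
  intro Δ hΔ hno
  rcases mwList_succ hc Δ hΔ with h | ⟨Δ'', h1, h2⟩
  · exact h
  · exact absurd (mwNext_eq_some.mp h2).2.1 (hno Δ'' h1)

end MWListProps
/-! ### DMW formula -/

/-- The truncations `Δ⁻` of the segments of `L`, with void segments dropped. -/
def shadows (L : List Seg) : Multiset Seg :=
  ((L.filter fun Δ => decide (Δ.1 ≤ Δ.2 - 1)).map fun Δ => (Δ.1, Δ.2 - 1) : List Seg)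

theorem mem_shadows {L : List Seg} {σ : Seg} :
    σ ∈ shadows L ↔ ∃ Δ ∈ L, Δ.1 ≤ Δ.2 - 1 ∧ σ = (Δ.1, Δ.2 - 1) := by
  unfold shadows
  simp only [Multiset.mem_coe, List.mem_map, List.mem_filter, decide_eq_true_eq]
  constructor
  · rintro ⟨Δ, ⟨h1, h2⟩, rfl⟩; exact ⟨Δ, h1, h2, rfl⟩
  · rintro ⟨Δ, h1, h2, rfl⟩; exact ⟨Δ, ⟨h1, h2⟩, rfl⟩

theorem foldl_dmw (L : List Seg) :
    ∀ acc : Multiset Seg, (L : Multiset Seg) ≤ acc →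
      L.foldl (fun acc Δ => pushSeg (acc.erase Δ) Δ.1 (Δ.2 - 1)) acc
        = (acc - (L : Multiset Seg)) + shadows L := by
  induction L with
  | nil => intro acc h; simp [shadows]
  | cons Δ L ih =>
    intro acc h
    have hΔacc : Δ ∈ acc := by
      apply Multiset.mem_of_le h
      simp
    have hL : (L : Multiset Seg) ≤ acc.erase Δ := by
      have := Multiset.erase_le_erase Δ h
      rwa [← Multiset.cons_coe, Multiset.erase_cons_head] at this
    simp only [List.foldl_cons]
    by_cases hv : Δ.1 ≤ Δ.2 - 1
    · have hpush : pushSeg (acc.erase Δ) Δ.1 (Δ.2 - 1) = acc.erase Δ + {(Δ.1, Δ.2 - 1)} := by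
        unfold pushSeg; rw [if_pos hv]
      rw [hpush]
      have hL' : (L : Multiset Seg) ≤ acc.erase Δ + {(Δ.1, Δ.2 - 1)} :=
        le_trans hL (Multiset.le_add_right _ _)
      rw [ih _ hL']
      have hsub : acc.erase Δ + {(Δ.1, Δ.2 - 1)} - (L : Multiset Seg)
          = (acc.erase Δ - (L : Multiset Seg)) + {(Δ.1, Δ.2 - 1)} := by
        rw [add_comm, add_comm (acc.erase Δ - _)]
        exact add_tsub_assoc_of_le hL _
      rw [hsub]
      have hshadow : shadows (Δ :: L) = (Δ.1, Δ.2 - 1) ::ₘ shadows L := by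
        unfold shadows
        simp [List.filter_cons, show Δ.1 < Δ.2 by omega]
      rw [hshadow, ← Multiset.cons_coe, Multiset.sub_cons]
      have : ({(Δ.1, Δ.2 - 1)} : Multiset Seg) + shadows L = (Δ.1, Δ.2 - 1) ::ₘ shadows L := by
        simp [Multiset.singleton_add]
      rw [add_assoc, this]
    · have hpush : pushSeg (acc.erase Δ) Δ.1 (Δ.2 - 1) = acc.erase Δ := by
        unfold pushSeg; rw [if_neg hv]
      rw [hpush, ih _ hL]
      have hshadow : shadows (Δ :: L) = shadows L := by
        unfold shadows
        simp [List.filter_cons, show ¬Δ.1 < Δ.2 by omega]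
      rw [hshadow, ← Multiset.cons_coe, Multiset.sub_cons]

theorem DMW_eq {m : Multiset Seg} {c : ℤ} (hc : msetMax (m.map Prod.snd) = some c) :
    DMW m = (m - ((mwList m : List Seg) : Multiset Seg)) + shadows (mwList m) := by
  unfold DMW
  exact foldl_dmw _ _ (mwList_coe_le hc)
/-! ### maxend propagation along DMW iterates -/

theorem mwList_zero : mwList (0 : Multiset Seg) = [] := by
  unfold mwList
  have : msetMax ((0 : Multiset Seg).map Prod.snd) = none := by
    rw [msetMax_eq_none]; simp
  rw [this]

theorem DMW_zero : DMW (0 : Multiset Seg) = 0 := by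
  unfold DMW
  rw [mwList_zero]
  rfl

theorem msetMax_of_ne_zero {s : Multiset ℤ} (h : s ≠ 0) : ∃ x, msetMax s = some x := by
  unfold msetMax
  rw [dif_neg h]
  exact ⟨_, rfl⟩

theorem IsMS_mono {n m : Multiset Seg} (h : n ≤ m) (hm : IsMS m) : IsMS n :=
  fun Δ hΔ => hm Δ (Multiset.mem_of_le h hΔ)

theorem IsMS_DMW {n : Multiset Seg} (hn : IsMS n) : IsMS (DMW n) := by
  by_cases h0 : n = 0
  · subst h0; rw [DMW_zero]; exact hn
  · have hne : n.map Prod.snd ≠ 0 := by simpa [Multiset.map_eq_zero] using h0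
    rcases msetMax_of_ne_zero hne with ⟨e, he⟩
    rw [DMW_eq he]
    intro Δ hΔ
    rcases Multiset.mem_add.mp hΔ with h | h
    · exact hn Δ (Multiset.mem_of_le (tsub_le_self) h)
    · rcases mem_shadows.mp h with ⟨Δ', _, h2, rfl⟩
      exact h2

theorem DMW_end_bound {n : Multiset Seg} {c : ℤ} (hb : ∀ Δ ∈ n, Δ.2 ≤ c) :
    ∀ Δ ∈ DMW n, Δ.2 ≤ c := by
  by_cases h0 : n = 0
  · subst h0; rw [DMW_zero]; exact hb
  · have hne : n.map Prod.snd ≠ 0 := by simpa [Multiset.map_eq_zero] using h0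
    rcases msetMax_of_ne_zero hne with ⟨e, he⟩
    rw [DMW_eq he]
    intro Δ hΔ
    rcases Multiset.mem_add.mp hΔ with h | h
    · exact hb Δ (Multiset.mem_of_le (tsub_le_self) h)
    · rcases mem_shadows.mp h with ⟨Δ', hΔ', _, rfl⟩
      have := hb Δ' (mwList_mem he Δ' hΔ')
      simp only
      omega

theorem DMW_exist_top {n : Multiset Seg} {c : ℤ} (hb : ∀ Δ ∈ n, Δ.2 ≤ c)
    (h : ∃ Δ ∈ DMW n, Δ.2 = c) : ∃ Δ ∈ n, Δ.2 = c := by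
  by_cases h0 : n = 0
  · subst h0; rwa [DMW_zero] at h
  · have hne : n.map Prod.snd ≠ 0 := by simpa [Multiset.map_eq_zero] using h0
    rcases msetMax_of_ne_zero hne with ⟨e, he⟩
    rw [DMW_eq he] at h
    rcases h with ⟨Δ, hΔ, hend⟩
    rcases Multiset.mem_add.mp hΔ with h | h
    · exact ⟨Δ, Multiset.mem_of_le (tsub_le_self) h, hend⟩
    · rcases mem_shadows.mp h with ⟨Δ', hΔ', _, rfl⟩
      have := hb Δ' (mwList_mem he Δ' hΔ')
      simp only at hend
      omega

section Iterates

variable {m : Multiset Seg} {c : ℤ}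

theorem iter_end_bound (hc : msetMax (m.map Prod.snd) = some c) :
    ∀ i, ∀ Δ ∈ DMW^[i] m, Δ.2 ≤ c := by
  intro i
  induction i with
  | zero => exact maxend_le hc
  | succ k ih =>
    rw [Function.iterate_succ_apply']
    exact DMW_end_bound ih

theorem iter_exist_top (hc : msetMax (m.map Prod.snd) = some c) :
    ∀ j i, i ≤ j → (∃ Δ ∈ DMW^[j] m, Δ.2 = c) → ∃ Δ ∈ DMW^[i] m, Δ.2 = c := by
  intro j
  induction j with
  | zero =>
    intro i hi h
    interval_cases i
    exact h
  | succ k ih =>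
    intro i hi h
    rcases Nat.lt_or_ge i (k + 1) with hlt | hge
    · apply ih i (by omega)
      rw [Function.iterate_succ_apply'] at h
      exact DMW_exist_top (iter_end_bound hc k) h
    · have : i = k + 1 := by omega
      subst this; exact h

theorem maxend_iter (hc : msetMax (m.map Prod.snd) = some c) {r : ℕ}
    (hstill : msetMax ((DMW^[r - 1] m).map Prod.snd) = some c) :
    ∀ i, i ≤ r - 1 → msetMax ((DMW^[i] m).map Prod.snd) = some c := by
  intro i hi
  apply maxend_eq_some.mpr
  exact ⟨iter_exist_top hc (r-1) i hi (maxend_mem hstill), iter_end_bound hc i⟩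

end Iterates
/-! ### CORE: junk segments do not affect the MW run; DOM: domination -/

theorem mwNext_add_junk {n s : Multiset Seg} {p : Seg}
    (hp : ∀ σ ∈ s, σ.2 = p.2 - 1 → ¬Prec σ p) :
    mwNext (n + s) p = mwNext n p := by
  unfold mwNext
  have h1 : endAt (n + s) (p.2 - 1) = endAt n (p.2 - 1) + endAt s (p.2 - 1) :=
    Multiset.filter_add _ _ _
  have h2 : (endAt s (p.2 - 1)).filter (fun Δ => Prec Δ p) = 0 := by
    rw [Multiset.filter_eq_nil]
    intro σ hσ hprec
    rcases mem_endAt.mp hσ with ⟨h3, h4⟩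
    exact hp σ h3 h4 hprec
  rw [h1, Multiset.filter_add, h2, add_zero]

theorem chain_transfer {n s : Multiset Seg}
    (hs : ∀ σ ∈ s, ∀ Δ' ∈ mwList n, Δ'.2 = σ.2 + 1 → Δ'.1 ≤ σ.1) :
    ∀ t p, MWChain n p t → p ∈ mwList n → (∀ q ∈ t, q ∈ mwList n) →
      MWChain (n + s) p t := by
  intro t
  induction t with
  | nil =>
    intro p hch hp _
    cases hch with
    | nil _ hnone =>
      apply MWChain.nil
      rw [mwNext_add_junk]
      · exact hnone
      · intro σ hσ hend hprec
        have := hs σ hσ p hp (by omega)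
        rcases hprec with ⟨hp1, _, _⟩
        omega
  | cons Δ t ih =>
    intro p hch hp hmem
    cases hch with
    | cons _ _ _ hnext hch' =>
      refine MWChain.cons _ _ _ ?_ ?_
      · rw [mwNext_add_junk]
        · exact hnext
        · intro σ hσ hend hprec
          have := hs σ hσ p hp (by omega)
          rcases hprec with ⟨hp1, _, _⟩
          omega
      · exact ih Δ hch' (hmem Δ (List.mem_cons_self))
          (fun q hq => hmem q (List.mem_cons_of_mem _ hq))

theorem core {n s : Multiset Seg} {c : ℤ}
    (hc : msetMax (n.map Prod.snd) = some c)
    (hlt : ∀ σ ∈ s, σ.2 < c)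
    (hs : ∀ σ ∈ s, ∀ Δ' ∈ mwList n, Δ'.2 = σ.2 + 1 → Δ'.1 ≤ σ.1) :
    mwList (n + s) = mwList n := by
  rcases mwList_spec hc with ⟨Δ0, t, heq, h0, ht⟩
  have hcs : msetMax ((n + s).map Prod.snd) = some c := by
    apply maxend_eq_some.mpr
    constructor
    · rcases maxend_mem hc with ⟨Δ, hΔ, hend⟩
      exact ⟨Δ, Multiset.mem_add.mpr (Or.inl hΔ), hend⟩
    · intro Δ hΔ
      rcases Multiset.mem_add.mp hΔ with h | h
      · exact maxend_le hc Δ h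
      · exact le_of_lt (hlt Δ h)
  have h0' : shortEnd (n + s) c = some Δ0 := by
    rcases shortEnd_eq_some.mp h0 with ⟨h1, h2, h3⟩
    apply shortEnd_eq_some.mpr
    refine ⟨Multiset.mem_add.mpr (Or.inl h1), h2, ?_⟩
    intro Δ' hΔ' hend'
    rcases Multiset.mem_add.mp hΔ' with h | h
    · exact h3 Δ' h hend'
    · exact absurd hend' (by have := hlt Δ' h; omega)
  rw [mwList_eq hcs h0' (chain_transfer hs t Δ0 ht (heq ▸ List.mem_cons_self)
    (fun q hq => heq ▸ List.mem_cons_of_mem _ hq)), heq]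

theorem dom {n' n : Multiset Seg} {c : ℤ} (hms : IsMS n) (hsub : n' ≤ n)
    (hc : msetMax (n.map Prod.snd) = some c)
    (hc' : msetMax (n'.map Prod.snd) = some c) :
    ∀ Δ' ∈ mwList n', ∃ Δ ∈ mwList n, Δ.2 = Δ'.2 ∧ Δ'.1 ≤ Δ.1 := by
  rcases mwList_spec hc' with ⟨Δ0', t', heq', h0', ht'⟩
  -- step for the invariant
  have step : ∀ p' Δp, p' ∈ n' → Δp ∈ mwList n → Δp.2 = p'.2 → p'.1 ≤ Δp.1 →
      ∀ Δ', mwNext n' p' = some Δ' →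
        ∃ Δ ∈ mwList n, Δ.2 = Δ'.2 ∧ Δ'.1 ≤ Δ.1 := by
    intro p' Δp hp'n' hΔp hends hle Δ' hnext
    rcases mwNext_eq_some.mp hnext with ⟨hΔ'n', hΔ'end, hΔ'prec, _⟩
    have hΔ'n : Δ' ∈ n := Multiset.mem_of_le hsub hΔ'n'
    have hΔpn : Δp ∈ n := mwList_mem hc Δp hΔp
    have hgen : Δp.1 ≤ Δp.2 := hms Δp hΔpn
    have hprec2 : Prec Δ' Δp := by
      rcases hΔ'prec with ⟨a1, a2, a3⟩
      exact ⟨by omega, by omega, by omega⟩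
    rcases mwList_succ hc Δp hΔp with hnone | ⟨Δ'', hΔ'', hsome⟩
    · exfalso
      exact mwNext_eq_none.mp hnone Δ' hΔ'n (by omega) hprec2
    · rcases mwNext_eq_some.mp hsome with ⟨_, hΔ''end, _, hmax⟩
      exact ⟨Δ'', hΔ'', by omega, hmax Δ' hΔ'n (by omega) hprec2⟩
  -- run along the chain
  have main : ∀ t p', MWChain n' p' t → p' ∈ n' →
      (∃ Δp ∈ mwList n, Δp.2 = p'.2 ∧ p'.1 ≤ Δp.1) →
      ∀ Δ' ∈ t, ∃ Δ ∈ mwList n, Δ.2 = Δ'.2 ∧ Δ'.1 ≤ Δ.1 := by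
    intro t
    induction t with
    | nil => intro p' _ _ _ Δ' h; simp at h
    | cons Δ₁ t ih =>
      intro p' hch hp'n' ⟨Δp, hΔp, he, hl⟩ Δ' hΔ'
      cases hch with
      | cons _ _ _ hnext hch' =>
        have hnew := step p' Δp hp'n' hΔp he hl Δ₁ hnext
        rcases List.mem_cons.mp hΔ' with rfl | hΔ'
        · exact hnew
        · rcases hnew with ⟨Δn, hΔn, he2, hl2⟩
          have hΔ₁n' : Δ₁ ∈ n' := (mwNext_eq_some.mp hnext).1
          exact ih Δ₁ hch' hΔ₁n' ⟨Δn, hΔn, he2, hl2⟩ Δ' hΔ'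
  intro Δ' hΔ'
  rw [heq'] at hΔ'
  rcases shortEnd_eq_some.mp h0' with ⟨h1, h2, _⟩
  rcases mwList_head hc with ⟨Δ0, hΔ0, hΔ0end, hΔ0max⟩
  have hhead : ∃ Δp ∈ mwList n, Δp.2 = Δ0'.2 ∧ Δ0'.1 ≤ Δp.1 :=
    ⟨Δ0, hΔ0, by omega, hΔ0max Δ0' (Multiset.mem_of_le hsub h1) (by omega)⟩
  rcases List.mem_cons.mp hΔ' with rfl | hΔ'
  · exact hhead
  · exact main t' Δ0' ht' h1 hhead Δ' hΔ'
/-! ### The stage induction -/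

section Stage

variable {m : Multiset Seg} {c : ℤ} {r : ℕ}

/-- sum of shadows of the first `i` runs -/
def ShSum (m : Multiset Seg) (i : ℕ) : Multiset Seg :=
  ∑ j ∈ Finset.range i, shadows (mwList (DMW^[j] m))

theorem mwStage_le_self (m : Multiset Seg) : ∀ i, mwStage m i ≤ m := by
  intro i
  induction i with
  | zero => exact le_refl m
  | succ k ih => exact le_trans tsub_le_self ih

theorem mwStage_anti (m : Multiset Seg) : ∀ i j, i ≤ j → mwStage m j ≤ mwStage m i := by
  intro i j hij
  induction j with
  | zero => have : i = 0 := by omega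
            subst this; exact le_refl _
  | succ k ih =>
    rcases Nat.lt_or_ge i (k + 1) with h | h
    · exact le_trans tsub_le_self (ih (by omega))
    · have : i = k + 1 := by omega
      subst this; exact le_refl _

theorem stageT (hm : IsMS m) (hc : msetMax (m.map Prod.snd) = some c)
    (hr : 1 ≤ r) (hstill : msetMax ((DMW^[r - 1] m).map Prod.snd) = some c) :
    ∀ i, i ≤ r - 1 →
      mwList (mwStage m i) = mwList (DMW^[i] m) ∧
      DMW^[i] m = mwStage m i + ShSum m i ∧
      msetMax ((mwStage m i).map Prod.snd) = some c := by
  intro i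
  induction i using Nat.strong_induction_on with
  | _ i ih =>
  match i with
  | 0 =>
    intro _
    refine ⟨rfl, ?_, hc⟩
    simp [ShSum, mwStage]
  | Nat.succ i =>
    intro hi1
    have hii : i ≤ r - 1 := by omega
    rcases ih i (by omega) hii with ⟨hL, hM, hmax⟩
    have hMi : msetMax ((DMW^[i] m).map Prod.snd) = some c := maxend_iter hc hstill i hii
    have hMi1 : msetMax ((DMW^[i+1] m).map Prod.snd) = some c := maxend_iter hc hstill _ hi1
    have hLle : ((mwList (DMW^[i] m) : List Seg) : Multiset Seg) ≤ mwStage m i := by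
      rw [← hL]
      exact mwList_coe_le hmax
    -- (2) at i+1
    have hM1 : DMW^[i+1] m = mwStage m (i+1) + ShSum m (i+1) := by
      rw [Function.iterate_succ_apply', DMW_eq hMi]
      nth_rewrite 1 [hM]
      have h1 : mwStage m i + ShSum m i - ((mwList (DMW^[i] m) : List Seg) : Multiset Seg)
          = (mwStage m i - ((mwList (DMW^[i] m) : List Seg) : Multiset Seg)) + ShSum m i := by
        rw [add_comm, add_comm (mwStage m i - _)]
        exact add_tsub_assoc_of_le hLle _
      rw [h1]
      show _ = mwStage m i - _ + ShSum m (i+1)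
      rw [add_assoc]
      congr 1
      unfold ShSum
      rw [Finset.sum_range_succ]
    -- shadows have ends < c
    have hShlt : ∀ σ ∈ ShSum m (i+1), σ.2 < c := by
      intro σ hσ
      unfold ShSum at hσ
      rcases Multiset.mem_sum.mp hσ with ⟨j, hj, hσj⟩
      rcases mem_shadows.mp hσj with ⟨Δ, hΔ, _, rfl⟩
      have hMj : msetMax ((DMW^[j] m).map Prod.snd) = some c :=
        maxend_iter hc hstill j (by simp at hj; omega)
      have := mwList_end_le hMj Δ hΔ
      simp only
      omega
    -- maxend of mwStage m (i+1)
    have hmax1 : msetMax ((mwStage m (i+1)).map Prod.snd) = some c := by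
      apply maxend_eq_some.mpr
      constructor
      · rcases maxend_mem hMi1 with ⟨Δ, hΔ, hend⟩
        rw [hM1] at hΔ
        rcases Multiset.mem_add.mp hΔ with h | h
        · exact ⟨Δ, h, hend⟩
        · exact absurd hend (by have := hShlt Δ h; omega)
      · intro Δ hΔ
        exact maxend_le hc Δ (Multiset.mem_of_le (mwStage_le_self m _) hΔ)
    -- (1) at i+1 via core
    have hcore : mwList (mwStage m (i+1) + ShSum m (i+1)) = mwList (mwStage m (i+1)) := by
      apply core hmax1 hShlt
      intro σ hσ Δ' hΔ' hend
      unfold ShSum at hσ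
      rcases Multiset.mem_sum.mp hσ with ⟨j, hj, hσj⟩
      rcases mem_shadows.mp hσj with ⟨Δs, hΔs, _, rfl⟩
      have hj' : j ≤ i := by simp at hj; omega
      rcases ih j (by omega) (by omega) with ⟨hLj, hMj', hmaxj⟩
      have hMj : msetMax ((DMW^[j] m).map Prod.snd) = some c :=
        maxend_iter hc hstill j (by omega)
      -- dom between mwStage m (i+1) and mwStage m j
      have hdom := dom (IsMS_mono (mwStage_le_self m j) hm)
        (mwStage_anti m j (i+1) (by omega)) hmaxj hmax1 Δ' hΔ'
      rcases hdom with ⟨Δ, hΔmem, hΔend, hΔle⟩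
      rw [hLj] at hΔmem
      -- end-injectivity on mwList (DMW^[j] m) : Δ = Δs
      have hΔsend : (Δs.1, Δs.2 - 1).2 + 1 = Δs.2 := by simp
      have : Δ = Δs := mwList_end_inj hMj Δ hΔmem Δs hΔs (by omega)
      subst this
      simp only
      omega
    refine ⟨?_, hM1, hmax1⟩
    rw [← hM1] at hcore
    rw [hcore]

end Stage
/-! ### Assembly helpers -/

section Assemble

variable {m : Multiset Seg} {c : ℤ} {r : ℕ}

theorem mwStage_eq_sub (m : Multiset Seg) : ∀ i,
    mwStage m i = m - ∑ j ∈ Finset.range i, ((mwList (DMW^[j] m) : List Seg) : Multiset Seg) := by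
  intro i
  induction i with
  | zero => simp [mwStage]
  | succ k ih =>
    show mwStage m k - _ = _
    rw [ih, Finset.sum_range_succ, tsub_tsub]

theorem sum_runs_le (hm : IsMS m) (hc : msetMax (m.map Prod.snd) = some c)
    (hr : 1 ≤ r) (hstill : msetMax ((DMW^[r - 1] m).map Prod.snd) = some c) :
    (∑ i ∈ Finset.range r, ((mwList (DMW^[i] m) : List Seg) : Multiset Seg)) ≤ m := by
  suffices h : ∀ k, k ≤ r →
      (∑ i ∈ Finset.range k, ((mwList (DMW^[i] m) : List Seg) : Multiset Seg)) ≤ m from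
    h r (le_refl r)
  intro k
  induction k with
  | zero => intro _; simp
  | succ k ih =>
    intro hk
    have hk1 : k ≤ r - 1 := by omega
    rcases stageT hm hc hr hstill k hk1 with ⟨hL, _, hmax⟩
    have hLle : ((mwList (DMW^[k] m) : List Seg) : Multiset Seg) ≤ mwStage m k := by
      rw [← hL]; exact mwList_coe_le hmax
    rw [mwStage_eq_sub] at hLle
    have hsum := ih (by omega)
    rw [Finset.sum_range_succ]
    exact (le_tsub_iff_left hsum).mp hLle

theorem run_dom (hm : IsMS m) (hc : msetMax (m.map Prod.snd) = some c)
    (hr : 1 ≤ r) (hstill : msetMax ((DMW^[r - 1] m).map Prod.snd) = some c)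
    {i j : ℕ} (hij : i ≤ j) (hj : j ≤ r - 1) :
    ∀ Δ' ∈ mwList (DMW^[j] m), ∃ Δ ∈ mwList (DMW^[i] m), Δ.2 = Δ'.2 ∧ Δ'.1 ≤ Δ.1 := by
  rcases stageT hm hc hr hstill j hj with ⟨hLj, _, hmaxj⟩
  rcases stageT hm hc hr hstill i (by omega) with ⟨hLi, _, hmaxi⟩
  rw [← hLj, ← hLi]
  exact dom (IsMS_mono (mwStage_le_self m i) hm) (mwStage_anti m i j hij) hmaxi hmaxj

end Assemble
/-! ### Abstract greedy matching machinery -/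

/-- Greedy matching of pool elements below successive thresholds. -/
inductive Greedy : Multiset ℤ → List ℤ → List ℤ → Prop
  | nil (P : Multiset ℤ) : Greedy P [] []
  | fail (P : Multiset ℤ) (y : ℤ) (ys : List ℤ) (h : ∀ x ∈ P, ¬x < y) : Greedy P (y :: ys) []
  | step (P : Multiset ℤ) (y : ℤ) (ys : List ℤ) (g : ℤ) (gs : List ℤ)
      (hg : g ∈ P) (hlt : g < y) (hmax : ∀ x ∈ P, x < y → x ≤ g)
      (htl : Greedy (P.erase g) ys gs) : Greedy P (y :: ys) (g :: gs)

theorem greedy_self {P : Multiset ℤ} {ys gs : List ℤ} (h : Greedy P ys gs) :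
    gs.length ≤ ys.length ∧ List.Forall₂ (· < ·) gs (ys.take gs.length) := by
  induction h with
  | nil P => exact ⟨le_refl _, List.Forall₂.nil⟩
  | fail P y ys h => exact ⟨by simp, List.Forall₂.nil⟩
  | step P y ys g gs hg hlt hmax htl ih =>
    refine ⟨by simpa using ih.1, ?_⟩
    simp only [List.length_cons, List.take_succ_cons]
    exact List.Forall₂.cons hlt ih.2

theorem greedy_dom {P : Multiset ℤ} {ys gs : List ℤ} (h : Greedy P ys gs) :
    ∀ xs : List ℤ, ((xs : List ℤ) : Multiset ℤ) ≤ P →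
      List.Forall₂ (· < ·) xs (ys.take xs.length) → xs.Pairwise (· ≥ ·) →
      xs.length ≤ gs.length ∧ List.Forall₂ (· ≤ ·) xs (gs.take xs.length) := by
  induction h with
  | nil P =>
    intro xs _ hf _
    simp only [List.take_nil] at hf
    cases hf
    exact ⟨le_refl _, by simp⟩
  | fail P y ys h =>
    intro xs hle hf _
    cases xs with
    | nil => exact ⟨by simp, List.Forall₂.nil⟩
    | cons x xs' =>
      exfalso
      simp only [List.length_cons, List.take_succ_cons] at hf
      cases hf with
      | cons hxy _ =>
        have hx : x ∈ P := Multiset.mem_of_le hle (by simp)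
        exact h x hx hxy
  | step P y ys g gs hg hlt hmax htl ih =>
    intro xs hle hf hsort
    cases xs with
    | nil => exact ⟨by simp, List.Forall₂.nil⟩
    | cons x xs' =>
      simp only [List.length_cons, List.take_succ_cons] at hf ⊢
      cases hf with
      | cons hxy hf' =>
        have hx : x ∈ P := Multiset.mem_of_le hle (by simp)
        have hxg : x ≤ g := hmax x hx hxy
        have hxs' : ((xs' : List ℤ) : Multiset ℤ) ≤ P.erase g := by
          by_cases hxeq : x = g
          · subst hxeq
            have : ((xs' : List ℤ) : Multiset ℤ) = ((x :: xs' : List ℤ) : Multiset ℤ).erase x := by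
              rw [← Multiset.cons_coe, Multiset.erase_cons_head]
            rw [this]
            exact Multiset.erase_le_erase x hle
          · have hgnot : g ∉ xs' := by
              intro hmem
              have : g ≤ x := List.rel_of_pairwise_cons hsort hmem
              omega
            rw [Multiset.le_iff_count]
            intro z
            by_cases hz : z = g
            · subst hz
              simp [Multiset.coe_count, List.count_eq_zero_of_not_mem hgnot]
            · rw [Multiset.count_erase_of_ne hz]
              have h1 : Multiset.count z ((x :: xs' : List ℤ) : Multiset ℤ) ≤ Multiset.count z P :=
                Multiset.le_iff_count.mp hle z
              have h2 : Multiset.count z ((xs' : List ℤ) : Multiset ℤ)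
                  ≤ Multiset.count z ((x :: xs' : List ℤ) : Multiset ℤ) := by
                rw [← Multiset.cons_coe, Multiset.count_cons]
                split <;> omega
              omega
        have := ih xs' hxs' hf' (List.Pairwise.of_cons hsort)
        exact ⟨by omega, List.Forall₂.cons hxg this.2⟩

/-- Forall₂ from a list relation is a multiset relation. -/
theorem rel_of_forall₂ {α β : Type} {r : α → β → Prop} :
    ∀ {l : List α} {l' : List β}, List.Forall₂ r l l' →
      Multiset.Rel r (l : Multiset α) (l' : Multiset β) := by
  intro l l' h
  induction h with
  | nil => exact Multiset.Rel.zero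
  | cons hab _ ih =>
    rw [← Multiset.cons_coe, ← Multiset.cons_coe]
    exact Multiset.Rel.cons hab ih

theorem forall₂_antisymm : ∀ {l l' : List ℤ},
    List.Forall₂ (· ≤ ·) l l' → List.Forall₂ (· ≤ ·) l' l → l = l' := by
  intro l l' h h'
  induction h with
  | nil => rfl
  | cons hab htl ih =>
    cases h' with
    | cons hba htl' =>
      rw [ih htl']
      congr 1
      omega

/-- re-pair a `Rel (<)` so that the maxima are paired. -/
theorem rel_erase_max {S Y : Multiset ℤ} {x' y' : ℤ}
    (h : Multiset.Rel (· < ·) S Y)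
    (hx : x' ∈ S) (hxmax : ∀ z ∈ S, z ≤ x')
    (hy : y' ∈ Y) (hymax : ∀ z ∈ Y, z ≤ y') :
    x' < y' ∧ Multiset.Rel (· < ·) (S.erase x') (Y.erase y') := by
  have hS : S = x' ::ₘ S.erase x' := (Multiset.cons_erase hx).symm
  rw [hS] at h
  rcases Multiset.rel_cons_left.mp h with ⟨y0, Y0, hxy0, hrel0, hY⟩
  have hy0max : y0 ≤ y' := hymax y0 (by rw [hY]; simp)
  constructor
  · omega
  · by_cases hyy : y' = y0
    · subst hyy
      rw [hY, Multiset.erase_cons_head]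
      exact hrel0
    · have hy'Y0 : y' ∈ Y0 := by
        rw [hY] at hy
        rcases Multiset.mem_cons.mp hy with h1 | h1
        · exact absurd h1 hyy
        · exact h1
      have hY0 : Y0 = y' ::ₘ Y0.erase y' := (Multiset.cons_erase hy'Y0).symm
      rw [hY0] at hrel0
      rcases Multiset.rel_cons_right.mp hrel0 with ⟨x1, S1, hx1y', hrel1, hS1⟩
      have hx1 : x1 ≤ x' := by
        apply hxmax
        rw [hS, hS1]
        simp
      have hx1y0 : x1 < y0 := by omega
      have hgoal : Multiset.Rel (· < ·) (x1 ::ₘ S1) (y0 ::ₘ Y0.erase y') :=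
        Multiset.Rel.cons hx1y0 hrel1
      rw [← hS1] at hgoal
      have : Y.erase y' = y0 ::ₘ Y0.erase y' := by
        rw [hY, hY0, Multiset.erase_cons_tail_of_mem (by simp)]
      rw [this]
      exact hgoal

/-- From a multiset matching, a sorted list matching against the threshold list. -/
theorem rel_to_sorted : ∀ (n : ℕ) (S Y : Multiset ℤ) (ys : List ℤ),
    S.card = n → Multiset.Rel (· < ·) S Y → Y ≤ (ys : Multiset ℤ) →
    ys.Pairwise (· ≥ ·) →
    ∃ xs : List ℤ, xs.Pairwise (· ≥ ·) ∧ ((xs : List ℤ) : Multiset ℤ) = S ∧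
      List.Forall₂ (· < ·) xs (ys.take xs.length) := by
  intro n
  induction n with
  | zero =>
    intro S Y ys hcard _ _ _
    have : S = 0 := Multiset.card_eq_zero.mp hcard
    exact ⟨[], List.Pairwise.nil, by simp [this], by simp [List.Forall₂.nil]⟩
  | succ n ih =>
    intro S Y ys hcard hrel hYle hsort
    have hSne : S ≠ 0 := by
      intro h; rw [h] at hcard; simp at hcard
    have hYne : Y ≠ 0 := by
      intro h
      rw [h] at hrel
      have := Multiset.card_eq_card_of_rel hrel
      rw [hcard] at this
      simp at this
    rcases msetMax_of_ne_zero (by simpa using hSne) with ⟨x', hx'⟩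
    rcases msetMax_of_ne_zero (by simpa using hYne) with ⟨y', hy'⟩
    rcases msetMax_eq_some.mp hx' with ⟨hx'mem, hx'max⟩
    rcases msetMax_eq_some.mp hy' with ⟨hy'mem, hy'max⟩
    rcases rel_erase_max hrel hx'mem hx'max hy'mem hy'max with ⟨hlt, hrel'⟩
    cases ys with
    | nil =>
      exfalso
      have := Multiset.mem_of_le hYle hy'mem
      simp at this
    | cons t ys₁ =>
      have hy't : y' ≤ t := by
        have hmem := Multiset.mem_of_le hYle hy'mem
        rw [Multiset.mem_coe, List.mem_cons] at hmem
        rcases hmem with rfl | hmem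
        · exact le_refl _
        · exact List.rel_of_pairwise_cons hsort hmem
      have hYle' : Y.erase y' ≤ ((ys₁ : List ℤ) : Multiset ℤ) := by
        rw [Multiset.le_iff_count]
        intro z
        by_cases hz : z = t
        · subst hz
          by_cases hyy : y' = z
          · subst hyy
            have h1 := Multiset.le_iff_count.mp hYle y'
            rw [← Multiset.cons_coe, Multiset.count_cons_self] at h1
            have h2 : Multiset.count y' (Y.erase y') = Multiset.count y' Y - 1 :=
              Multiset.count_erase_self _ _
            omega
          · have hznot : z ∉ Y := by
              intro hmem
              have := hy'max z hmem
              omega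
            rw [Multiset.count_eq_zero_of_notMem
              (fun hmem => hznot (Multiset.mem_of_mem_erase hmem))]
            omega
        · have h1 := Multiset.le_iff_count.mp hYle z
          rw [← Multiset.cons_coe, Multiset.count_cons_of_ne hz] at h1
          calc Multiset.count z (Y.erase y') ≤ Multiset.count z Y :=
                Multiset.count_le_of_le z (Multiset.erase_le _ _)
            _ ≤ _ := h1
      have hcard' : (S.erase x').card = n := by
        rw [Multiset.card_erase_of_mem hx'mem, hcard]
        rfl
      have hsort₁ : ys₁.Pairwise (· ≥ ·) := List.Pairwise.of_cons hsort
      rcases ih (S.erase x') (Y.erase y') ys₁ hcard' hrel' hYle' hsort₁ with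
        ⟨xs₁, hxs₁sort, hxs₁coe, hxs₁f⟩
      refine ⟨x' :: xs₁, ?_, ?_, ?_⟩
      · apply List.pairwise_cons.mpr
        refine ⟨?_, hxs₁sort⟩
        intro b hb
        apply hx'max
        have : b ∈ S.erase x' := by rw [← hxs₁coe]; simpa using hb
        exact Multiset.mem_of_mem_erase this
      · rw [← Multiset.cons_coe, hxs₁coe, Multiset.cons_erase hx'mem]
      · simp only [List.length_cons, List.take_succ_cons]
        exact List.Forall₂.cons (by omega) hxs₁f
/-! ### Column lists of MW participants per end -/

def runElt (m : Multiset Seg) (k : ℤ) (i : ℕ) : Option Seg :=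
  (mwList (DMW^[i] m)).find? fun Δ => decide (Δ.2 = k)

def colStarts (m : Multiset Seg) (k : ℤ) : ℕ → ℕ → List ℤ
  | _, 0 => []
  | i, q + 1 =>
    match runElt m k i with
    | none => []
    | some Δ => Δ.1 :: colStarts m k (i + 1) q

theorem runElt_some {m : Multiset Seg} {k : ℤ} {i : ℕ} {Δ : Seg}
    (h : runElt m k i = some Δ) : Δ ∈ mwList (DMW^[i] m) ∧ Δ.2 = k := by
  refine ⟨List.mem_of_find?_eq_some h, ?_⟩
  have := List.find?_some h
  simpa using this

theorem runElt_none {m : Multiset Seg} {k : ℤ} {i : ℕ}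
    (h : runElt m k i = none) : ∀ Δ ∈ mwList (DMW^[i] m), Δ.2 ≠ k := by
  intro Δ hΔ
  have := List.find?_eq_none.mp h Δ hΔ
  simpa using this

theorem runElt_of_mem {m : Multiset Seg} {k : ℤ} {i : ℕ} {Δ : Seg}
    (hΔ : Δ ∈ mwList (DMW^[i] m)) (he : Δ.2 = k) : ∃ Δ', runElt m k i = some Δ' := by
  cases h : runElt m k i with
  | none => exact absurd he (runElt_none h Δ hΔ)
  | some Δ' => exact ⟨Δ', rfl⟩

theorem IsMS_iter {m : Multiset Seg} (hm : IsMS m) : ∀ i, IsMS (DMW^[i] m) := by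
  intro i
  induction i with
  | zero => exact hm
  | succ n ih => rw [Function.iterate_succ_apply']; exact IsMS_DMW ih

section Col

variable {m : Multiset Seg} {c : ℤ} {r : ℕ}

theorem map_fst_erase {A : Multiset Seg} {Δ : Seg} (h : Δ ∈ A) :
    (A.erase Δ).map Prod.fst = (A.map Prod.fst).erase Δ.1 := by
  have hA : A = Δ ::ₘ A.erase Δ := (Multiset.cons_erase h).symm
  have : A.map Prod.fst = Δ.1 ::ₘ (A.erase Δ).map Prod.fst := by
    conv_lhs => rw [hA]
    rw [Multiset.map_cons]
  rw [this, Multiset.erase_cons_head]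

theorem filter_runElt_some (hm : IsMS m) (hc : msetMax (m.map Prod.snd) = some c)
    (hr : 1 ≤ r) (hstill : msetMax ((DMW^[r - 1] m).map Prod.snd) = some c)
    {k : ℤ} {i : ℕ} (hi : i ≤ r - 1) {Δ : Seg} (h : runElt m k i = some Δ) :
    ((mwList (DMW^[i] m) : List Seg) : Multiset Seg).filter (fun Δ' => Δ'.2 = k) = {Δ} := by
  have hMi := maxend_iter hc hstill i hi
  rcases runElt_some h with ⟨hmem, hend⟩
  have huniq : ∀ x ∈ ((mwList (DMW^[i] m) : List Seg) : Multiset Seg).filter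
      (fun Δ' => Δ'.2 = k), x = Δ := by
    intro x hx
    rcases Multiset.mem_filter.mp hx with ⟨hx1, hx2⟩
    exact mwList_end_inj hMi x (Multiset.mem_coe.mp hx1) Δ hmem (by omega)
  have hrep := Multiset.eq_replicate_card.mpr huniq
  have hmemf : Δ ∈ ((mwList (DMW^[i] m) : List Seg) : Multiset Seg).filter
      (fun Δ' => Δ'.2 = k) := Multiset.mem_filter.mpr ⟨Multiset.mem_coe.mpr hmem, hend⟩
  have hcard1 : Multiset.card (((mwList (DMW^[i] m) : List Seg) : Multiset Seg).filter
      (fun Δ' => Δ'.2 = k)) = 1 := by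
    have hnd : (((mwList (DMW^[i] m) : List Seg) : Multiset Seg).filter
        (fun Δ' => Δ'.2 = k)).Nodup :=
      Multiset.Nodup.filter _ (Multiset.coe_nodup.mpr (mwList_nodup hMi))
    have hle1 := Multiset.nodup_iff_count_le_one.mp hnd Δ
    have hge1 := Multiset.one_le_count_iff_mem.mpr hmemf
    have := Multiset.count_eq_card.mpr (fun x hx => (huniq x hx).symm)
    omega
  rw [hcard1] at hrep
  simpa using hrep

theorem filter_runElt_none {k : ℤ} {i : ℕ} (h : runElt m k i = none) :
    ((mwList (DMW^[i] m) : List Seg) : Multiset Seg).filter (fun Δ' => Δ'.2 = k) = 0 := by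
  rw [Multiset.filter_eq_nil]
  intro Δ hΔ
  exact runElt_none h Δ (Multiset.mem_coe.mp hΔ)

theorem runElt_initial (hm : IsMS m) (hc : msetMax (m.map Prod.snd) = some c)
    (hr : 1 ≤ r) (hstill : msetMax ((DMW^[r - 1] m).map Prod.snd) = some c)
    {k : ℤ} {i j : ℕ} (hij : i ≤ j) (hj : j ≤ r - 1) {Δ : Seg}
    (h : runElt m k j = some Δ) : ∃ Δ', runElt m k i = some Δ' ∧ Δ.1 ≤ Δ'.1 := by
  rcases runElt_some h with ⟨hmem, hend⟩
  rcases run_dom hm hc hr hstill hij hj Δ hmem with ⟨Δ', hΔ', he, hle⟩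
  rcases runElt_of_mem (k := k) hΔ' (by omega) with ⟨Δ'', h''⟩
  rcases runElt_some h'' with ⟨hmem'', hend''⟩
  have hMi := maxend_iter hc hstill i (by omega)
  have : Δ' = Δ'' := mwList_end_inj hMi Δ' hΔ' Δ'' hmem'' (by omega)
  exact ⟨Δ'', h'', by rw [← this]; exact hle⟩

theorem colStarts_mem {k : ℤ} : ∀ q i {z : ℤ}, z ∈ colStarts m k i q →
    ∃ j, i ≤ j ∧ j < i + q ∧ ∃ Δ, runElt m k j = some Δ ∧ Δ.1 = z := by
  intro q
  induction q with
  | zero => intro i z h; simp [colStarts] at h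
  | succ q ih =>
    intro i z h
    unfold colStarts at h
    cases hre : runElt m k i with
    | none => rw [hre] at h; simp at h
    | some Δ =>
      rw [hre] at h
      rcases List.mem_cons.mp h with rfl | h
      · exact ⟨i, le_refl _, by omega, Δ, hre, rfl⟩
      · rcases ih (i + 1) h with ⟨j, hj1, hj2, hj3⟩
        exact ⟨j, by omega, by omega, hj3⟩

theorem colStarts_sorted (hm : IsMS m) (hc : msetMax (m.map Prod.snd) = some c)
    (hr : 1 ≤ r) (hstill : msetMax ((DMW^[r - 1] m).map Prod.snd) = some c)
    {k : ℤ} : ∀ q i, i + q ≤ r → (colStarts m k i q).Pairwise (· ≥ ·) := by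
  intro q
  induction q with
  | zero => intro i _; exact List.Pairwise.nil
  | succ q ih =>
    intro i hi
    unfold colStarts
    cases hre : runElt m k i with
    | none => exact List.Pairwise.nil
    | some Δ =>
      apply List.pairwise_cons.mpr
      refine ⟨?_, ih (i + 1) (by omega)⟩
      intro z hz
      rcases colStarts_mem q (i + 1) hz with ⟨j, hj1, hj2, Δj, hΔj, rfl⟩
      rcases runElt_initial hm hc hr hstill (by omega : i ≤ j) (by omega) hΔj with
        ⟨Δ', h', hle⟩
      rw [hre] at h'
      cases h'
      exact hle

theorem colStarts_genuine (hm : IsMS m) (hc : msetMax (m.map Prod.snd) = some c)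
    (hr : 1 ≤ r) (hstill : msetMax ((DMW^[r - 1] m).map Prod.snd) = some c)
    {k : ℤ} : ∀ q i, i + q ≤ r → ∀ z ∈ colStarts m k i q, z ≤ k := by
  intro q i hi z hz
  rcases colStarts_mem q i hz with ⟨j, hj1, hj2, Δ, hΔ, rfl⟩
  rcases runElt_some hΔ with ⟨hmem, hend⟩
  have hMj := maxend_iter hc hstill j (by omega)
  have := IsMS_iter hm j Δ (mwList_mem hMj Δ hmem)
  omega

theorem MWkSet_eq (hm : IsMS m) (hc : msetMax (m.map Prod.snd) = some c)
    (hr : 1 ≤ r) (hstill : msetMax ((DMW^[r - 1] m).map Prod.snd) = some c)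
    {k : ℤ} : ∀ q i, i + q ≤ r →
      (∑ j ∈ Finset.range q,
          ((mwList (DMW^[i + j] m) : List Seg) : Multiset Seg).filter (fun Δ => Δ.2 = k))
        = (((colStarts m k i q).map (fun x => (x, k)) : List Seg) : Multiset Seg) := by
  intro q
  induction q with
  | zero => intro i _; simp [colStarts]
  | succ q ih =>
    intro i hi
    rw [Finset.sum_range_succ' (fun j =>
      ((mwList (DMW^[i + j] m) : List Seg) : Multiset Seg).filter (fun Δ => Δ.2 = k)) q]
    have hsum : (∑ j ∈ Finset.range q,
        ((mwList (DMW^[i + (j + 1)] m) : List Seg) : Multiset Seg).filter (fun Δ => Δ.2 = k))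
        = ∑ j ∈ Finset.range q,
        ((mwList (DMW^[(i + 1) + j] m) : List Seg) : Multiset Seg).filter (fun Δ => Δ.2 = k) := by
      apply Finset.sum_congr rfl
      intro j _
      have hj : i + (j + 1) = (i + 1) + j := by omega
      rw [hj]
    rw [hsum]
    simp only [Nat.add_zero]
    unfold colStarts
    cases hre : runElt m k i with
    | none =>
      have hzero : ∀ j ∈ Finset.range q,
          ((mwList (DMW^[(i+1) + j] m) : List Seg) : Multiset Seg).filter (fun Δ => Δ.2 = k)
            = 0 := by
        intro j hj
        simp only [Finset.mem_range] at hj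
        cases hre2 : runElt m k ((i+1)+j) with
        | none => exact filter_runElt_none hre2
        | some Δ =>
          exfalso
          rcases runElt_initial hm hc hr hstill (by omega : i ≤ (i+1)+j) (by omega) hre2 with
            ⟨Δ', h', _⟩
          rw [hre] at h'
          cases h'
      rw [Finset.sum_congr rfl hzero, filter_runElt_none hre]
      simp only [Finset.sum_const_zero, add_zero, List.map_nil]
      rfl
    | some Δ =>
      rw [ih (i + 1) (by omega), filter_runElt_some hm hc hr hstill (by omega) hre]
      have hΔeq : Δ = (Δ.1, k) := by
        rcases runElt_some hre with ⟨_, hend⟩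
        cases Δ; simp_all
      simp only [List.map_cons]
      rw [← Multiset.cons_coe]
      rw [← hΔeq]
      rw [add_comm]
      rfl

end Col
/-! ### Greedy instantiation -/

section GreedyInst

variable {m : Multiset Seg} {c : ℤ} {r : ℕ}

theorem greedy_inst (hm : IsMS m) (hc : msetMax (m.map Prod.snd) = some c)
    (hr : 1 ≤ r) (hstill : msetMax ((DMW^[r - 1] m).map Prod.snd) = some c)
    {k : ℤ} (hk : k < c) : ∀ q i, i + q ≤ r →
      Greedy ((endAt (mwStage m i) k).map Prod.fst)
        (colStarts m (k + 1) i q) (colStarts m k i q) := by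
  intro q
  induction q with
  | zero => intro i _; exact Greedy.nil _
  | succ q ih =>
    intro i hi
    have hir : i ≤ r - 1 := by omega
    rcases stageT hm hc hr hstill i hir with ⟨hLi, _, hmaxi⟩
    have hMi := maxend_iter hc hstill i hir
    have hmsi : IsMS (mwStage m i) := IsMS_mono (mwStage_le_self m i) hm
    unfold colStarts
    cases hre1 : runElt m (k + 1) i with
    | none =>
      cases hre2 : runElt m k i with
      | none => exact Greedy.nil _
      | some Δ0 =>
        exfalso
        rcases runElt_some hre2 with ⟨hmem, hend⟩
        rcases mwList_consec hMi Δ0 hmem (by omega) with ⟨Δ', hΔ', _, hend'⟩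
        rcases runElt_of_mem (k := k + 1) hΔ' (by omega) with ⟨Δ'', h''⟩
        rw [hre1] at h''
        cases h''
    | some Δ1 =>
      rcases runElt_some hre1 with ⟨hΔ1mem, hΔ1end⟩
      have hΔ1mst : Δ1 ∈ mwList (mwStage m i) := by rw [hLi]; exact hΔ1mem
      have hΔ1m : Δ1 ∈ mwStage m i := mwList_mem hmaxi Δ1 hΔ1mst
      have hΔ1gen : Δ1.1 ≤ Δ1.2 := hmsi Δ1 hΔ1m
      cases hre2 : runElt m k i with
      | some Δ0 =>
        rcases runElt_some hre2 with ⟨hΔ0mem, hΔ0end⟩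
        have hΔ0mst : Δ0 ∈ mwList (mwStage m i) := by rw [hLi]; exact hΔ0mem
        rcases mwList_consec hmaxi Δ0 hΔ0mst (by omega) with ⟨Δ', hΔ', hnx, hΔ'end⟩
        have hΔ'Δ1 : Δ' = Δ1 := mwList_end_inj hmaxi Δ' hΔ' Δ1 hΔ1mst (by omega)
        subst hΔ'Δ1
        rcases mwNext_eq_some.mp hnx with ⟨hΔ0mst', hΔ0end', ⟨hp1, hp2, hp3⟩, hmaxprop⟩
        have hpool : (endAt (mwStage m (i + 1)) k).map Prod.fst
            = ((endAt (mwStage m i) k).map Prod.fst).erase Δ0.1 := by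
          have h1 : mwStage m (i + 1)
              = mwStage m i - ((mwList (DMW^[i] m) : List Seg) : Multiset Seg) := rfl
          have h2 : endAt (mwStage m (i + 1)) k
              = endAt (mwStage m i) k
                - ((mwList (DMW^[i] m) : List Seg) : Multiset Seg).filter
                    (fun Δ' => Δ'.2 = k) := by
            rw [h1]
            exact Multiset.filter_sub _ _ _
          rw [h2, filter_runElt_some hm hc hr hstill hir hre2, Multiset.sub_singleton]
          apply map_fst_erase
          exact mem_endAt.mpr ⟨hΔ0mst', by omega⟩
        apply Greedy.step
        · exact Multiset.mem_map.mpr ⟨Δ0, mem_endAt.mpr ⟨hΔ0mst', by omega⟩, rfl⟩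
        · exact hp1
        · intro x hx hxlt
          rcases Multiset.mem_map.mp hx with ⟨Δ, hΔmem, rfl⟩
          rcases mem_endAt.mp hΔmem with ⟨hΔm, hΔe⟩
          exact hmaxprop Δ hΔm (by omega) ⟨hxlt, by omega, by omega⟩
        · rw [← hpool]
          exact ih (i + 1) (by omega)
      | none =>
        apply Greedy.fail
        intro x hx hxlt
        rcases Multiset.mem_map.mp hx with ⟨Δ, hΔmem, rfl⟩
        rcases mem_endAt.mp hΔmem with ⟨hΔm, hΔe⟩
        have hstop : mwNext (mwStage m i) Δ1 = none := by
          apply mwList_stop hmaxi Δ1 hΔ1mst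
          intro Δ'' hΔ'' hcontra
          have hΔ''Li : Δ'' ∈ mwList (DMW^[i] m) := by rw [← hLi]; exact hΔ''
          exact runElt_none hre2 Δ'' hΔ''Li (by omega)
        exact mwNext_eq_none.mp hstop Δ hΔm (by omega) ⟨hxlt, by omega, by omega⟩

end GreedyInst
/-! ### Minimal linkedness -/

theorem filter_sum_comm (p : Seg → Prop) [DecidablePred p] (f : ℕ → Multiset Seg) :
    ∀ n, (∑ i ∈ Finset.range n, (f i).filter p) = (∑ i ∈ Finset.range n, f i).filter p := by
  intro n
  induction n with
  | zero => simp
  | succ n ih => rw [Finset.sum_range_succ, Finset.sum_range_succ, ih, Multiset.filter_add]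

theorem forall₂_and_right {α β : Type} {r : α → β → Prop} {p : β → Prop} :
    ∀ {l : List α} {l' : List β}, List.Forall₂ r l l' → (∀ b ∈ l', p b) →
      List.Forall₂ (fun a b => r a b ∧ p b) l l' := by
  intro l l' h hp
  induction h with
  | nil => exact List.Forall₂.nil
  | cons hab htl ih =>
    exact List.Forall₂.cons ⟨hab, hp _ (List.mem_cons_self)⟩
      (ih fun b hb => hp b (List.mem_cons_of_mem _ hb))

theorem sort_of_sorted_desc {l : List ℤ} (h : l.Pairwise (· ≥ ·)) :
    Multiset.sort ((l : List ℤ) : Multiset ℤ) (· ≤ ·) = l.reverse := by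
  refine (fun hp h2 => List.Perm.eq_of_pairwise' (r := (· ≤ ·)) (Multiset.pairwise_sort _ _) h2 hp) ?_ ?_
  · have h1 : ((Multiset.sort ((l : List ℤ) : Multiset ℤ) (· ≤ ·) : List ℤ) : Multiset ℤ)
        = ((l.reverse : List ℤ) : Multiset ℤ) := by
      rw [Multiset.sort_eq, Multiset.coe_eq_coe]
      exact l.reverse_perm.symm
    exact Multiset.coe_eq_coe.mp h1
  · rw [List.pairwise_reverse]
    exact h

theorem minlinked_main {m : Multiset Seg} {c : ℤ} {r : ℕ}
    (hm : IsMS m) (hc : msetMax (m.map Prod.snd) = some c)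
    (hr : 1 ≤ r) (hstill : msetMax ((DMW^[r - 1] m).map Prod.snd) = some c)
    (k : ℤ) (hk : k < c) :
    MinLinked m (k + 1) (MWkSet m r k) (MWkSet m r (k + 1)) := by
  have hk1 : k + 1 - 1 = k := by ring
  set gs := colStarts m k 0 r with hgs
  set ys := colStarts m (k + 1) 0 r with hys
  -- representations
  have hn₁ : MWkSet m r k = ((gs.map (fun x => (x, k)) : List Seg) : Multiset Seg) := by
    unfold MWkSet
    have := MWkSet_eq hm hc hr hstill (k := k) r 0 (by omega)
    simp only [Nat.zero_add] at this
    exact this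
  have hn₂ : MWkSet m r (k + 1)
      = ((ys.map (fun x => (x, k + 1)) : List Seg) : Multiset Seg) := by
    unfold MWkSet
    have := MWkSet_eq hm hc hr hstill (k := k + 1) r 0 (by omega)
    simp only [Nat.zero_add] at this
    exact this
  have hgr : Greedy ((endAt m k).map Prod.fst) ys gs :=
    greedy_inst hm hc hr hstill hk r 0 (by omega)
  have hys_sorted : ys.Pairwise (· ≥ ·) := colStarts_sorted hm hc hr hstill r 0 (by omega)
  have hgs_sorted : gs.Pairwise (· ≥ ·) := colStarts_sorted hm hc hr hstill r 0 (by omega)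
  have hys_gen : ∀ z ∈ ys, z ≤ k + 1 := colStarts_genuine hm hc hr hstill r 0 (by omega)
  -- map fst identities
  have hfst₁ : (MWkSet m r k).map Prod.fst = ((gs : List ℤ) : Multiset ℤ) := by
    rw [hn₁, Multiset.map_coe, List.map_map]
    have : (Prod.fst ∘ fun x : ℤ => (x, k)) = id := rfl
    rw [this, List.map_id]
  have hfst₂ : (MWkSet m r (k + 1)).map Prod.fst = ((ys : List ℤ) : Multiset ℤ) := by
    rw [hn₂, Multiset.map_coe, List.map_map]
    have : (Prod.fst ∘ fun x : ℤ => (x, k + 1)) = id := rfl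
    rw [this, List.map_id]
  -- the common analysis of a linked submultiset
  have hanalyze : ∀ n₁' ≤ endAt m k, LinkedByMapping n₁' (MWkSet m r (k + 1)) →
      ∃ xs : List ℤ, xs.Pairwise (· ≥ ·) ∧
        ((xs : List ℤ) : Multiset ℤ) = n₁'.map Prod.fst ∧
        xs.length ≤ gs.length ∧ List.Forall₂ (· ≤ ·) xs (gs.take xs.length) := by
    intro n₁' hle ⟨n₂', hn₂'le, hrel⟩
    have hrelS : Multiset.Rel (· < ·) (n₁'.map Prod.fst) (n₂'.map Prod.fst) := by
      rw [Multiset.rel_map]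
      exact hrel.mono fun a _ b _ hab => hab.1
    have hY'le : n₂'.map Prod.fst ≤ ((ys : List ℤ) : Multiset ℤ) := by
      rw [← hfst₂]
      exact Multiset.map_le_map hn₂'le
    rcases rel_to_sorted (n₁'.map Prod.fst).card (n₁'.map Prod.fst) (n₂'.map Prod.fst) ys
      rfl hrelS hY'le hys_sorted with ⟨xs, hxs_sorted, hxs_coe, hxs_f⟩
    have hxsP : ((xs : List ℤ) : Multiset ℤ) ≤ (endAt m k).map Prod.fst := by
      rw [hxs_coe]
      exact Multiset.map_le_map hle
    rcases greedy_dom hgr xs hxsP hxs_f hxs_sorted with ⟨hlen, hfa⟩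
    exact ⟨xs, hxs_sorted, hxs_coe, hlen, hfa⟩
  refine ⟨?_, ?_, ?_, ?_, ?_⟩
  · -- n₁ ≤ endAt m (k+1-1)
    rw [hk1]
    unfold MWkSet
    rw [filter_sum_comm]
    exact Multiset.filter_le_filter _ (sum_runs_le hm hc hr hstill)
  · unfold MWkSet
    rw [filter_sum_comm]
    exact Multiset.filter_le_filter _ (sum_runs_le hm hc hr hstill)
  · -- LinkedByMapping
    rcases greedy_self hgr with ⟨hlen, hf⟩
    refine ⟨(((ys.take gs.length).map (fun x => (x, k + 1)) : List Seg) : Multiset Seg),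
      ?_, ?_⟩
    · rw [hn₂]
      exact Multiset.coe_le.mpr (((List.take_sublist _ _).map _).subperm)
    · rw [hn₁]
      apply rel_of_forall₂
      rw [List.forall₂_map_left_iff, List.forall₂_map_right_iff]
      apply (forall₂_and_right hf
        (fun b hb => hys_gen b (List.mem_of_mem_take hb))).imp
      intro g y ⟨h1, h2⟩
      exact ⟨h1, by omega, by omega⟩
  · -- maximality of cardinality
    intro n₁' hle hlink
    rw [hk1] at hle
    rcases hanalyze n₁' hle hlink with ⟨xs, _, hcoe, hlen, _⟩
    have h1 : n₁'.card = xs.length := by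
      have := congrArg Multiset.card hcoe
      simpa using this.symm
    have h2 : (MWkSet m r k).card = gs.length := by
      rw [hn₁]
      simp
    omega
  · -- minimality
    intro n₁' hle hcard hlt hlink
    rw [hk1] at hle
    rcases hanalyze n₁' hle hlink with ⟨xs, hxs_sorted, hcoe, hlen, hfa⟩
    have h1 : n₁'.card = xs.length := by
      have := congrArg Multiset.card hcoe
      simpa using this.symm
    have h2 : (MWkSet m r k).card = gs.length := by
      rw [hn₁]
      simp
    have hxslen : xs.length = gs.length := by omega
    rw [hxslen, List.take_length] at hfa
    -- compute sorted starts
    have hss₁' : startsSorted n₁' = xs.reverse := by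
      unfold startsSorted
      rw [← hcoe]
      exact sort_of_sorted_desc hxs_sorted
    have hss₁ : startsSorted (MWkSet m r k) = gs.reverse := by
      unfold startsSorted
      rw [hfst₁]
      exact sort_of_sorted_desc hgs_sorted
    rcases hlt with ⟨hne, hfa'⟩
    apply hne
    rw [hss₁', hss₁]
    rw [hss₁', hss₁] at hfa'
    have : List.Forall₂ (· ≤ ·) xs.reverse gs.reverse :=
      List.forall₂_reverse_iff.mpr hfa
    exact forall₂_antisymm this hfa'

/-- structure of the segments participating in the first `r` runs
of the MW algorithm. -/
theorem stmt10 (m : Multiset Seg) (hm : IsMS m) (hne : m ≠ 0)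
    (c : ℤ) (hc : msetMax (m.map Prod.snd) = some c)
    (r : ℕ) (hr : 1 ≤ r)
    (hstill : msetMax ((DMW^[r - 1] m).map Prod.snd) = some c)
    (a : ℤ) (ha : mwFirstSeg m = some (a, c)) :
    -- (i) the MW participants of `m_i` are exactly those of `(𝒟^MW)^i(m)`
    (∀ i < r, mwList (mwStage m i) = mwList (DMW^[i] m)) ∧
    -- in particular all participants form a submultisegment of `m`
    (∑ i ∈ Finset.range r, (mwList (DMW^[i] m) : Multiset Seg)) ≤ m ∧
    -- (ii)(a): if a run reaches down to end `k` it reaches end `k+1` ...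
    (∀ i < r, ∀ k : ℤ, a ≤ k → k < c →
        (∃ Δ ∈ mwList (DMW^[i] m), Δ.2 = k) →
          ∃ Δ ∈ mwList (DMW^[i] m), Δ.2 = k + 1) ∧
    -- ... and the runs reaching end `k` form an initial segment (so
    -- `x_c ≥ x_{c-1} ≥ ⋯ ≥ x_a` and `MW_k(m) = {Δ_{k,1},…,Δ_{k,x_k}}`)
    (∀ i j : ℕ, i ≤ j → j < r → ∀ k : ℤ, a ≤ k → k ≤ c →
        (∃ Δ ∈ mwList (DMW^[j] m), Δ.2 = k) →
          ∃ Δ ∈ mwList (DMW^[i] m), Δ.2 = k) ∧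
    -- (ii)(b): for a fixed end `k`, the participants `Δ_{k,1}, Δ_{k,2}, …` are
    -- in increasing order
    (∀ i j : ℕ, i ≤ j → j < r → ∀ Δ Δ' : Seg,
        Δ ∈ mwList (DMW^[i] m) → Δ' ∈ mwList (DMW^[j] m) → Δ.2 = Δ'.2 →
          Δ'.1 ≤ Δ.1) ∧
    -- (ii)(c): `MW_k(m)` and `MW_{k+1}(m)` are minimally linked in `m`
    (∀ k : ℤ, a ≤ k → k < c →
        MinLinked m (k + 1) (MWkSet m r k) (MWkSet m r (k + 1))) := by
  refine ⟨?_, ?_, ?_, ?_, ?_, ?_⟩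
  · intro i hi
    exact (stageT hm hc hr hstill i (by omega)).1
  · exact sum_runs_le hm hc hr hstill
  · intro i hi k _ hkc ⟨Δ, hΔ, hend⟩
    have hMi : msetMax ((DMW^[i] m).map Prod.snd) = some c :=
      maxend_iter hc hstill i (by omega)
    rcases mwList_consec hMi Δ hΔ (by omega) with ⟨Δ', hΔ', _, hend'⟩
    exact ⟨Δ', hΔ', by omega⟩
  · intro i j hij hj k _ _ ⟨Δ, hΔ, hend⟩
    rcases run_dom hm hc hr hstill hij (by omega) Δ hΔ with ⟨Δ', hΔ', he, _⟩
    exact ⟨Δ', hΔ', by omega⟩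
  · intro i j hij hj Δ Δ' hΔ hΔ' hend
    rcases run_dom hm hc hr hstill hij (by omega) Δ' hΔ' with ⟨Δ'', hΔ'', he, hle⟩
    have hMi : msetMax ((DMW^[i] m).map Prod.snd) = some c :=
      maxend_iter hc hstill i (by omega)
    have : Δ'' = Δ := mwList_end_inj hMi Δ'' hΔ'' Δ hΔ (by omega)
    subst this
    exact hle
  · intro k _ hkc
    exact minlinked_main hm hc hr hstill k hkc

end Multiseg
end
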